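/- arXiv:2504.06466 — 6 statements merged into one kernel-verified Lean document; each statement's English description precedes it below -/
import Mathlib

section
/- For n ≥ 1, the number of weakly increasing Fubini rankings of length n equals 2^(n-1). -/
/-- A Fubini ranking of length `n`: entries in `{1,...,n}` and every value `v`
appearing satisfies `v = 1 + #{j : r_j < v}`. -/
def IsFubini (n : ℕ) (l : List ℕ) : Prop :=
  l.length = n ∧ (∀ x ∈ l, 1 ≤ x ∧ x ≤ n) ∧
    ∀ v ∈ l, v = 1 + l.countP (fun x => decide (x < v))

/-- Split a list (with given head) into maximal runs w.r.t. relation `R`. -/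
def runsAux (R : ℕ → ℕ → Bool) : ℕ → List ℕ → List (List ℕ)
  | a, [] => [[a]]
  | a, b :: l =>
    match runsAux R b l with
    | (c :: r) :: rest =>
        if R a b then (a :: c :: r) :: rest else [a] :: (c :: r) :: rest
    | rs => [a] :: rs

/-- The maximal runs of a list with respect to the relation `R`. -/
def runs (R : ℕ → ℕ → Bool) : List ℕ → List (List ℕ)
  | [] => []
  | a :: l => runsAux R a l

/-- Maximal runs of weak ascents. -/
def weakRuns (l : List ℕ) : List (List ℕ) := runs (fun a b => decide (a ≤ b)) l

/-- Maximal runs of strict ascents. -/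
def strictRuns (l : List ℕ) : List (List ℕ) := runs (fun a b => decide (a < b)) l

/-- Leading terms of a list of runs. -/
def leadingTerms (rs : List (List ℕ)) : List ℕ := rs.map List.headI

/-- Weakly flattened w.r.t. runs of weak ascents. -/
def WeaklyFlattenedWeak (l : List ℕ) : Prop :=
  (leadingTerms (weakRuns l)).Chain' (· ≤ ·)

/-- Flattened w.r.t. runs of weak ascents. -/
def FlattenedWeak (l : List ℕ) : Prop :=
  (leadingTerms (weakRuns l)).Chain' (· < ·)

/-- Weakly flattened w.r.t. runs of strict ascents. -/
def WeaklyFlattenedStrict (l : List ℕ) : Prop :=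
  (leadingTerms (strictRuns l)).Chain' (· ≤ ·)

/-- Flattened w.r.t. runs of strict ascents. -/
def FlattenedStrict (l : List ℕ) : Prop :=
  (leadingTerms (strictRuns l)).Chain' (· < ·)

/-- The content `(c_1, ..., c_n)` of a tuple of length `n`: `c_i` is the number
of entries equal to `i`. -/
def content (l : List ℕ) : List ℕ :=
  (List.range l.length).map (fun i => l.count (i + 1))

/-- The reduced content: multiplicities of the distinct values, in increasing
order of the values. -/
def reducedContent (l : List ℕ) : List ℕ :=
  (l.toFinset.sort (· ≤ ·)).map (fun v => l.count v)

/-- `a_1` copies of `1`, then `a_2` copies of `1 + a_1`, etc. (auxiliary). -/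
def stairsAux : ℕ → List ℕ → List ℕ
  | _, [] => []
  | s, c :: rest => List.replicate c (s + 1) ++ stairsAux (s + c) rest

/-- The weakly increasing tuple with reduced content `a`. -/
def stairs (a : List ℕ) : List ℕ := stairsAux 0 a

/-- Auxiliary: each entry equals the previous value or its 1-indexed position. -/
def Good : ℕ → ℕ → List ℕ → Prop
  | _, _, [] => True
  | cur, i, x :: xs => (x = cur ∨ x = i) ∧ Good x (i + 1) xs

/-- Build a list from a sequence of bits. -/
def build : ℕ → ℕ → List Bool → List ℕ
  | _, _, [] => []
  | cur, i, b :: bs => (if b then i else cur) :: build (if b then i else cur) (i + 1) bs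

lemma build_length : ∀ (bs : List Bool) (cur i : ℕ), (build cur i bs).length = bs.length
  | [], _, _ => rfl
  | _ :: bs, cur, i => by simp [build, build_length bs]

lemma good_build : ∀ (bs : List Bool) (cur i : ℕ), Good cur i (build cur i bs)
  | [], _, _ => trivial
  | b :: bs, cur, i => by
      refine ⟨?_, good_build bs _ _⟩
      cases b <;> simp

lemma build_inj : ∀ (bs bs' : List Bool) (cur i : ℕ), cur < i →
    build cur i bs = build cur i bs' → bs = bs'
  | [], [], _, _, _, _ => rfl
  | [], _ :: _, _, _, _, h => by simp [build] at h
  | _ :: _, [], _, _, _, h => by simp [build] at h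
  | b :: bs, b' :: bs', cur, i, hlt, h => by
      simp only [build, List.cons.injEq] at h
      have hb : b = b' := by
        by_contra hne
        cases b <;> cases b' <;> simp_all <;> omega
      subst hb
      have := build_inj bs bs' (if b then i else cur) (i + 1)
        (by cases b <;> simp <;> omega) h.2
      rw [this]

lemma good_exists : ∀ (t : List ℕ) (cur i : ℕ), Good cur i t →
    ∃ bs : List Bool, build cur i bs = t
  | [], _, _, _ => ⟨[], rfl⟩
  | x :: xs, cur, i, h => by
      obtain ⟨bs, hbs⟩ := good_exists xs x (i + 1) h.2
      rcases h.1 with rfl | rfl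
      · exact ⟨false :: bs, by simp [build, hbs]⟩
      · exact ⟨true :: bs, by simp [build, hbs]⟩

lemma good_main : ∀ (t : List ℕ) (cur i : ℕ), Good cur i t → 1 ≤ cur → cur < i →
    (cur :: t).Chain' (· ≤ ·) ∧ (∀ x ∈ t, cur ≤ x ∧ x < i + t.length) ∧
    (∀ v ∈ t, v = cur ∨ i ≤ v) ∧
    (∀ v ∈ t, t.countP (fun x => decide (x < v)) = if v ≤ cur then 0 else v - i)
  | [], cur, i, _, _, _ => by simp [List.Chain']
  | x :: xs, cur, i, hG, h1, hlt => by
      obtain ⟨hx, hGx⟩ := hG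
      have hx1 : 1 ≤ x := by rcases hx with h | h <;> omega
      have hxi : x < i + 1 := by rcases hx with h | h <;> omega
      have hcx : cur ≤ x := by rcases hx with h | h <;> omega
      obtain ⟨IH1, IH2, IH3, IH4⟩ := good_main xs x (i + 1) hGx hx1 hxi
      have hzero : xs.countP (fun y => decide (y < x)) = 0 := by
        rw [List.countP_eq_zero]
        intro y hy
        simp only [decide_eq_true_eq, not_lt]
        exact (IH2 y hy).1
      have hcount_x : (x :: xs).countP (fun y => decide (y < x)) = 0 := by
        rw [List.countP_cons]
        simp [hzero]
      refine ⟨?_, ?_, ?_, ?_⟩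
      · exact List.isChain_cons_cons.mpr ⟨hcx, IH1⟩
      · intro y hy
        rcases List.mem_cons.mp hy with rfl | hy
        · constructor
          · exact hcx
          · simp only [List.length_cons]; omega
        · obtain ⟨h2, h3⟩ := IH2 y hy
          constructor
          · omega
          · simp only [List.length_cons]; omega
      · intro v hv
        rcases List.mem_cons.mp hv with rfl | hv
        · rcases hx with h | h
          · exact Or.inl h
          · exact Or.inr (by omega)
        · rcases IH3 v hv with h | h
          · subst h; rcases hx with h | h
            · exact Or.inl h
            · exact Or.inr (by omega)
          · exact Or.inr (by omega)
      · intro v hv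
        rcases List.mem_cons.mp hv with rfl | hv
        · rw [hcount_x]
          rcases hx with h | h <;> split <;> omega
        · have hxle : x ≤ v := (IH2 v hv).1
          rcases eq_or_lt_of_le hxle with rfl | hxv
          · rw [hcount_x]
            rcases hx with h | h <;> split <;> omega
          · have hvi : i + 1 ≤ v := by
              rcases IH3 v hv with h | h
              · omega
              · exact h
            have h4 := IH4 v hv
            rw [if_neg (by omega : ¬ v ≤ x)] at h4
            rw [List.countP_cons, h4]
            rw [if_neg (by omega : ¬ v ≤ cur)]
            simp only [decide_eq_true_eq, if_pos hxv]
            omega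

lemma good_of : ∀ (t : List ℕ) (cur i : ℕ), (cur :: t).Chain' (· ≤ ·) →
    (∀ v ∈ t, cur < v → t.countP (fun x => decide (x < v)) + i = v) →
    Good cur i t
  | [], _, _, _, _ => trivial
  | x :: xs, cur, i, hch, H => by
      rw [List.Chain', List.isChain_cons_cons] at hch
      obtain ⟨hcx, hch'⟩ := hch
      have hpw : ∀ y ∈ xs, x ≤ y := by
        have := (List.isChain_iff_pairwise.mp hch')
        exact fun y hy => List.rel_of_pairwise_cons this hy
      have hzero : xs.countP (fun y => decide (y < x)) = 0 := by
        rw [List.countP_eq_zero]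
        intro y hy
        simp only [decide_eq_true_eq, not_lt]
        exact hpw y hy
      constructor
      · rcases eq_or_lt_of_le hcx with h | h
        · exact Or.inl h.symm
        · right
          have := H x List.mem_cons_self h
          rw [List.countP_cons] at this
          simp [hzero] at this
          omega
      · apply good_of xs x (i + 1) hch'
        intro v hv hxv
        have := H v (List.mem_cons_of_mem x hv) (lt_of_le_of_lt hcx hxv)
        rw [List.countP_cons] at this
        simp only [decide_eq_true_eq, if_pos hxv] at this
        omega

lemma ofFn_cast (m : ℕ) (bs : List Bool) (h : bs.length = m) :
    List.ofFn (fun i : Fin m => bs.get (Fin.cast h.symm i)) = bs := by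
  subst h
  exact List.ofFn_get bs

theorem weakly_increasing_fubini_count (n : ℕ) (hn : 1 ≤ n) :
    {l : List ℕ | IsFubini n l ∧ l.Chain' (· ≤ ·)}.ncard = 2 ^ (n - 1) := by
  classical
  set G : (Fin (n - 1) → Bool) → List ℕ := fun f => 1 :: build 1 2 (List.ofFn f) with hG
  have hinj : Function.Injective G := by
    intro f f' h
    simp only [hG, List.cons.injEq, true_and] at h
    have := build_inj (List.ofFn f) (List.ofFn f') 1 2 (by omega) h
    exact List.ofFn_injective this
  have hset : {l : List ℕ | IsFubini n l ∧ l.Chain' (· ≤ ·)} = Set.range G := by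
    ext l
    simp only [Set.mem_setOf_eq, Set.mem_range]
    constructor
    · rintro ⟨⟨hlen, hbound, hcount⟩, hch⟩
      obtain ⟨a, t, rfl⟩ : ∃ a t, l = a :: t := by
        cases l with
        | nil => simp at hlen; omega
        | cons a t => exact ⟨a, t, rfl⟩
      have hpw : ∀ y ∈ t, a ≤ y := by
        have := List.isChain_iff_pairwise.mp hch
        exact fun y hy => List.rel_of_pairwise_cons this hy
      have ha : a = 1 := by
        have h1 := hcount a List.mem_cons_self
        rw [List.countP_cons] at h1
        have hzero : t.countP (fun x => decide (x < a)) = 0 := by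
          rw [List.countP_eq_zero]
          intro y hy
          simp only [decide_eq_true_eq, not_lt]
          exact hpw y hy
        simp [hzero] at h1
        omega
      subst ha
      have hgood : Good 1 2 t := by
        apply good_of t 1 2 hch
        intro v hv hv1
        have h1 := hcount v (List.mem_cons_of_mem 1 hv)
        rw [List.countP_cons] at h1
        simp only [decide_eq_true_eq, if_pos hv1] at h1
        omega
      obtain ⟨bs, hbs⟩ := good_exists t 1 2 hgood
      have hblen : bs.length = n - 1 := by
        have := build_length bs 1 2
        rw [hbs] at this
        simp at hlen
        omega
      refine ⟨fun i => bs.get (Fin.cast hblen.symm i), ?_⟩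
      simp only [hG]
      rw [ofFn_cast (n - 1) bs hblen, hbs]
    · rintro ⟨f, rfl⟩
      have hblen : (build 1 2 (List.ofFn f)).length = n - 1 := by
        rw [build_length]; simp
      obtain ⟨h1, h2, h3, h4⟩ := good_main (build 1 2 (List.ofFn f)) 1 2
        (good_build (List.ofFn f) 1 2) le_rfl (by omega)
      set t := build 1 2 (List.ofFn f) with ht
      refine ⟨⟨?_, ?_, ?_⟩, ?_⟩
      · simp only [hG, List.length_cons, build_length, List.length_ofFn]; omega
      · intro x hx
        rcases List.mem_cons.mp hx with rfl | hx
        · exact ⟨le_rfl, hn⟩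
        · obtain ⟨hx1, hx2⟩ := h2 x hx
          rw [hblen] at hx2
          exact ⟨hx1, by omega⟩
      · intro v hv
        rcases List.mem_cons.mp hv with rfl | hv
        · have hzero : t.countP (fun x => decide (x < 1)) = 0 := by
            rw [List.countP_eq_zero]
            intro y hy
            simp only [decide_eq_true_eq, not_lt]
            exact (h2 y hy).1
          simp only [hG, List.countP_cons]
          rw [hzero]
          simp
        · have hc := h4 v hv
          simp only [hG, List.countP_cons]
          by_cases hv1 : v ≤ 1
          · have : v = 1 := le_antisymm hv1 (h2 v hv).1
            subst this
            rw [if_pos le_rfl] at hc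
            rw [hc]
            simp
          · rw [if_neg hv1] at hc
            have hv2 : 2 ≤ v := by
              rcases h3 v hv with h | h
              · omega
              · exact h
            rw [hc]
            simp only [decide_eq_true_eq]
            rw [if_pos (by omega : (1 : ℕ) < v)]
            omega
      · exact h1
  rw [hset, ← Set.image_univ, Set.ncard_image_of_injective _ hinj, Set.ncard_univ]
  simp [Nat.card_eq_fintype_card]
end

section
/- For n ≥ 1, the number of weakly decreasing Fubini rankings of length n equals 2^(n-1). -/
lemma stairsAux_length (s : ℕ) (a : List ℕ) : (stairsAux s a).length = a.sum := by
  induction a generalizing s with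
  | nil => simp [stairsAux]
  | cons c rest ih => simp [stairsAux, ih]

lemma stairsAux_mem_bounds (s : ℕ) (a : List ℕ) (ha : ∀ x ∈ a, 0 < x) :
    ∀ x ∈ stairsAux s a, s + 1 ≤ x ∧ x ≤ s + a.sum := by
  induction a generalizing s with
  | nil => simp [stairsAux]
  | cons c rest ih =>
    intro x hx
    have hc : 0 < c := ha c (by simp)
    rcases List.mem_append.1 hx with h | h
    · have := List.eq_of_mem_replicate h
      subst this
      simp only [List.sum_cons]
      omega
    · have := ih (s + c) (fun y hy => ha y (by simp [hy])) x h
      simp only [List.sum_cons]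
      omega

lemma stairsAux_countP (s : ℕ) (a : List ℕ) (ha : ∀ x ∈ a, 0 < x) :
    ∀ v ∈ stairsAux s a, v = s + 1 + (stairsAux s a).countP (fun x => decide (x < v)) := by
  induction a generalizing s with
  | nil => simp [stairsAux]
  | cons c rest ih =>
    intro v hv
    have hc : 0 < c := ha c (by simp)
    have hrest : ∀ y ∈ rest, 0 < y := fun y hy => ha y (by simp [hy])
    rw [stairsAux, List.countP_append]
    rcases List.mem_append.1 (by rw [stairsAux] at hv; exact hv) with h | h
    · have hv1 : v = s + 1 := List.eq_of_mem_replicate h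
      subst hv1
      have h1 : (List.replicate c (s + 1)).countP (fun x => decide (x < s + 1)) = 0 := by
        rw [List.countP_eq_zero]; intro x hx
        have := List.eq_of_mem_replicate hx; simp [this]
      have h2 : (stairsAux (s + c) rest).countP (fun x => decide (x < s + 1)) = 0 := by
        rw [List.countP_eq_zero]; intro x hx
        have := stairsAux_mem_bounds (s + c) rest hrest x hx
        simp only [decide_eq_true_eq]; omega
      omega
    · have hvb := stairsAux_mem_bounds (s + c) rest hrest v h
      have h1 : (List.replicate c (s + 1)).countP (fun x => decide (x < v)) = c := by
        have := List.countP_eq_length (p := fun x => decide (x < v))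
          (l := List.replicate c (s + 1))
        simp only [List.length_replicate] at this
        refine this.2 ?_
        intro x hx
        have := List.eq_of_mem_replicate hx
        simp only [decide_eq_true_eq]; omega
      have h2 := ih (s + c) hrest v h
      omega

lemma stairsAux_sorted (s : ℕ) (a : List ℕ) (ha : ∀ x ∈ a, 0 < x) :
    (stairsAux s a).Pairwise (· ≤ ·) := by
  induction a generalizing s with
  | nil => simp [stairsAux]
  | cons c rest ih =>
    rw [stairsAux]
    refine List.pairwise_append.2 ⟨?_, ih (s + c) (fun y hy => ha y (by simp [hy])), ?_⟩
    · exact List.pairwise_replicate.2 (Or.inr rfl) |>.imp le_of_eq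
    · intro x hx y hy
      have hx' := List.eq_of_mem_replicate hx
      have hy' := stairsAux_mem_bounds (s + c) rest (fun z hz => ha z (by simp [hz])) y hy
      omega

lemma stairsAux_inj (s : ℕ) (a b : List ℕ) (ha : ∀ x ∈ a, 0 < x) (hb : ∀ x ∈ b, 0 < x)
    (h : stairsAux s a = stairsAux s b) : a = b := by
  induction a generalizing b s with
  | nil =>
    cases b with
    | nil => rfl
    | cons c rest =>
      exfalso
      have := congrArg List.length h
      rw [stairsAux_length, stairsAux_length] at this
      have hc : 0 < c := hb c (by simp)
      simp at this; omega
  | cons c rest ih =>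
    cases b with
    | nil =>
      exfalso
      have := congrArg List.length h
      rw [stairsAux_length, stairsAux_length] at this
      have hc : 0 < c := ha c (by simp)
      simp at this; omega
    | cons c' rest' =>
      have hc : 0 < c := ha c (by simp)
      have hc' : 0 < c' := hb c' (by simp)
      -- count of (s+1)
      have key : ∀ (d : ℕ) (r : List ℕ), 0 < d → (∀ x ∈ r, 0 < x) →
          (stairsAux s (d :: r)).count (s + 1) = d := by
        intro d r hd hr
        rw [stairsAux, List.count_append, List.count_replicate]
        have h0 : (stairsAux (s + d) r).count (s + 1) = 0 := by
          rw [List.count_eq_zero]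
          intro hmem
          have := stairsAux_mem_bounds (s + d) r hr _ hmem
          omega
        simp [h0]
      have hcc : c = c' := by
        have := key c rest hc (fun y hy => ha y (by simp [hy]))
        have h2 := key c' rest' hc' (fun y hy => hb y (by simp [hy]))
        rw [h] at this; rw [this] at h2; omega
      subst hcc
      rw [stairsAux, stairsAux] at h
      have htail : stairsAux (s + c) rest = stairsAux (s + c) rest' :=
        List.append_cancel_left h
      have := ih (s + c) rest' (fun y hy => ha y (by simp [hy]))
        (fun y hy => hb y (by simp [hy])) htail
      rw [this]

lemma exists_stairsAux (N : ℕ) : ∀ (m : List ℕ), m.length ≤ N → ∀ (s : ℕ),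
    m.Pairwise (· ≤ ·) →
    (∀ v ∈ m, v = s + 1 + m.countP (fun x => decide (x < v))) →
    ∃ a, (∀ x ∈ a, 0 < x) ∧ a.sum = m.length ∧ stairsAux s a = m := by
  induction N with
  | zero =>
    intro m hm s _ _
    have : m = [] := List.length_eq_zero_iff.1 (Nat.le_zero.1 hm)
    exact ⟨[], by simp [this, stairsAux]⟩
  | succ N ihN =>
    intro m hm s hsort hf
    cases m with
    | nil => exact ⟨[], by simp [stairsAux]⟩
    | cons x rest =>
      -- x = s + 1
      have hxmem : x ∈ x :: rest := by simp
      have hge : ∀ y ∈ x :: rest, x ≤ y := by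
        intro y hy
        rcases List.mem_cons.1 hy with h | h
        · omega
        · exact (List.pairwise_cons.1 hsort).1 y h
      have hcount0 : (x :: rest).countP (fun z => decide (z < x)) = 0 := by
        rw [List.countP_eq_zero]
        intro z hz
        have := hge z hz
        simp only [decide_eq_true_eq]; omega
      have hx : x = s + 1 := by have := hf x hxmem; omega
      subst hx
      set m := (s + 1) :: rest with hmdef
      set t := m.takeWhile (fun y => decide (y ≤ s + 1)) with ht
      set d := m.dropWhile (fun y => decide (y ≤ s + 1)) with hd
      have htd : t ++ d = m := List.takeWhile_append_dropWhile
      have htrep : t = List.replicate t.length (s + 1) := by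
        rw [List.eq_replicate_iff]
        refine ⟨rfl, ?_⟩
        intro b hb
        have h1 : b ≤ s + 1 := by
          have := List.mem_takeWhile_imp hb
          simpa using this
        have h2 : s + 1 ≤ b := hge b (by rw [← htd]; exact List.mem_append_left _ hb)
        omega
      have htpos : 0 < t.length := by
        have : t = (s+1) :: rest.takeWhile (fun y => decide (y ≤ s + 1)) := by
          rw [ht, hmdef, List.takeWhile_cons_of_pos (by simp)]
        rw [this]; simp
      have hdmem : ∀ y ∈ d, s + 1 < y := by
        intro y hy
        have hdsorted : d.Pairwise (· ≤ ·) := hsort.sublist (List.dropWhile_sublist _)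
        cases hdd : d with
        | nil => rw [hdd] at hy; simp at hy
        | cons z zs =>
          have hz : ¬ (z ≤ s + 1) := by
            have := List.head?_dropWhile_not (fun y => decide (y ≤ s + 1)) m
            rw [← hd, hdd] at this
            simpa using this
          rw [hdd] at hy hdsorted
          rcases List.mem_cons.1 hy with h | h
          · omega
          · have := (List.pairwise_cons.1 hdsorted).1 y h
            omega
      have hdcount : ∀ v ∈ d, v = (s + t.length) + 1 + d.countP (fun x => decide (x < v)) := by
        intro v hv
        have hvm : v ∈ m := by rw [← htd]; exact List.mem_append_right _ hv
        have h1 := hf v hvm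
        have h2 : m.countP (fun x => decide (x < v)) =
            t.countP (fun x => decide (x < v)) + d.countP (fun x => decide (x < v)) := by
          rw [← htd, List.countP_append]
        have h3 : t.countP (fun x => decide (x < v)) = t.length := by
          rw [List.countP_eq_length]
          intro x hx
          rw [htrep] at hx
          have := List.eq_of_mem_replicate hx
          have hv' := hdmem v hv
          simp only [decide_eq_true_eq]; omega
        omega
      have hdlen : d.length ≤ N := by
        have : t.length + d.length = m.length := by
          rw [← List.length_append, htd]
        have hmlen : m.length ≤ N + 1 := hm
        omega
      obtain ⟨a', ha'pos, ha'sum, ha'eq⟩ := ihN d hdlen (s + t.length)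
        (hsort.sublist (List.dropWhile_sublist _)) hdcount
      refine ⟨t.length :: a', ?_, ?_, ?_⟩
      · intro y hy
        rcases List.mem_cons.1 hy with h | h
        · subst h; exact htpos
        · exact ha'pos y h
      · simp only [List.sum_cons, ha'sum]
        have : t.length + d.length = m.length := by rw [← List.length_append, htd]
        omega
      · rw [stairsAux, ha'eq, ← htrep, htd]

lemma stairs_isFubini (n : ℕ) (c : Composition n) :
    IsFubini n (stairsAux 0 c.blocks).reverse ∧
      (stairsAux 0 c.blocks).reverse.Chain' (· ≥ ·) := by
  have hpos : ∀ x ∈ c.blocks, 0 < x := fun x hx => c.blocks_pos hx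
  refine ⟨⟨?_, ?_, ?_⟩, ?_⟩
  · rw [List.length_reverse, stairsAux_length, c.blocks_sum]
  · intro x hx
    rw [List.mem_reverse] at hx
    have := stairsAux_mem_bounds 0 c.blocks hpos x hx
    rw [c.blocks_sum] at this
    omega
  · intro v hv
    rw [List.mem_reverse] at hv
    have := stairsAux_countP 0 c.blocks hpos v hv
    rw [List.countP_reverse]
    omega
  · have hs := stairsAux_sorted 0 c.blocks hpos
    have : (stairsAux 0 c.blocks).reverse.Pairwise (· ≥ ·) :=
      List.pairwise_reverse.2 hs
    exact this.isChain

theorem weakly_decreasing_fubini_count (n : ℕ) (hn : 1 ≤ n) :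
    {l : List ℕ | IsFubini n l ∧ l.Chain' (· ≥ ·)}.ncard = 2 ^ (n - 1) := by
  classical
  set S := {l : List ℕ | IsFubini n l ∧ l.Chain' (· ≥ ·)} with hS
  have hbij : Function.Bijective (fun c : Composition n =>
      (⟨(stairsAux 0 c.blocks).reverse, stairs_isFubini n c⟩ : S)) := by
    constructor
    · intro c₁ c₂ h
      have h' : (stairsAux 0 c₁.blocks).reverse = (stairsAux 0 c₂.blocks).reverse := by
        exact congrArg Subtype.val h
      have h'' : stairsAux 0 c₁.blocks = stairsAux 0 c₂.blocks :=
        List.reverse_injective h'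
      exact Composition.ext (stairsAux_inj 0 _ _
        (fun x hx => c₁.blocks_pos hx) (fun x hx => c₂.blocks_pos hx) h'')
    · rintro ⟨l, hF, hC⟩
      have hm : l.reverse.Pairwise (· ≤ ·) := by
        have h1 : l.Pairwise (· ≥ ·) := List.isChain_iff_pairwise.1 hC
        exact List.pairwise_reverse.2 (by simpa using h1)
      have hf : ∀ v ∈ l.reverse,
          v = 0 + 1 + l.reverse.countP (fun x => decide (x < v)) := by
        intro v hv
        rw [List.mem_reverse] at hv
        rw [List.countP_reverse]
        have := hF.2.2 v hv
        omega
      obtain ⟨a, hapos, hasum, haeq⟩ :=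
        exists_stairsAux l.reverse.length l.reverse le_rfl 0 hm hf
      have hsum : a.sum = n := by
        rw [hasum, List.length_reverse, hF.1]
      refine ⟨⟨a, fun {i} hi => hapos i hi, hsum⟩, ?_⟩
      simp only [Subtype.mk.injEq]
      rw [haeq, List.reverse_reverse]
  rw [← Nat.card_coe_set_eq, Nat.card_congr (Equiv.ofBijective _ hbij).symm,
    Nat.card_eq_fintype_card, composition_card]
end

section
/- In a weakly flattened Fubini ranking with runs of weak ascents, any run consisting of a single element must be the final run of the sequence. -/
lemma runsAux_spec (R : ℕ → ℕ → Bool) (l : List ℕ) (a : ℕ) :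
    runsAux R a l ≠ [] ∧ (runsAux R a l).headI.headI = a ∧
    (∀ r ∈ runsAux R a l, r ≠ []) ∧
    (runsAux R a l).Chain' (fun r s => R (r.getLastD 0) s.headI = false) := by
  induction l generalizing a with
  | nil => simp [runsAux, List.Chain', List.isChain_singleton]
  | cons b l ih =>
    obtain ⟨h1, h2, h3, h4⟩ := ih b
    rcases hrb : runsAux R b l with _ | ⟨r0, rest⟩
    · exact absurd hrb h1
    rcases r0 with _ | ⟨c, r⟩
    · exact absurd rfl (h3 [] (hrb ▸ List.mem_cons_self))
    rw [hrb] at h2 h3 h4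
    simp only [List.headI] at h2
    subst h2
    by_cases hab : R a c
    · have hres : runsAux R a (c :: l) = (a :: c :: r) :: rest := by
        simp only [runsAux, hrb]; rw [if_pos hab]
      rw [hres]
      refine ⟨by simp, by simp, ?_, ?_⟩
      · intro r' hr'
        rcases List.mem_cons.mp hr' with h | h
        · simp [h]
        · exact h3 r' (List.mem_cons_of_mem _ h)
      · rw [List.Chain', List.isChain_cons] at h4 ⊢
        simp only [List.getLastD_cons] at h4 ⊢
        exact h4
    · have hres : runsAux R a (c :: l) = [a] :: (c :: r) :: rest := by
        simp only [runsAux, hrb]; rw [if_neg hab]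
      rw [hres]
      refine ⟨by simp, by simp, ?_, ?_⟩
      · intro r' hr'
        rcases List.mem_cons.mp hr' with h | h
        · simp [h]
        · exact h3 r' h
      · rw [List.Chain', List.isChain_cons_cons]
        refine ⟨?_, h4⟩
        simpa using hab

theorem singleton_run_is_last (n : ℕ) (l : List ℕ) (hf : IsFubini n l)
    (hw : WeaklyFlattenedWeak l) (i : ℕ) (hi : i < (weakRuns l).length)
    (h1 : ((weakRuns l)[i]).length = 1) :
    i = (weakRuns l).length - 1 := by
  by_contra hne
  have hi1 : i + 1 < (weakRuns l).length := by omega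
  rcases l with _ | ⟨a, l'⟩
  · simp [weakRuns, runs] at hi
  have spec := runsAux_spec (fun a b => decide (a ≤ b)) l' a
  have hrs : weakRuns (a :: l') = runsAux (fun a b => decide (a ≤ b)) a l' := rfl
  obtain ⟨x, hx⟩ := List.length_eq_one_iff.mp h1
  have hchain := spec.2.2.2
  rw [← hrs, List.Chain', List.isChain_iff_getElem] at hchain
  have hdesc := hchain i (by omega)
  have hwc := hw
  unfold WeaklyFlattenedWeak leadingTerms at hwc
  rw [List.Chain', List.isChain_iff_getElem] at hwc
  have hle := hwc i (by simpa using (by omega : i + 1 < (weakRuns (a :: l')).length))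
  simp only [List.get_eq_getElem, List.getElem_map] at hle hdesc
  rw [hx] at hle
  simp only [hx] at hdesc
  simp only [List.headI, List.getLastD_cons, List.getLastD_nil] at hle hdesc
  simp only [decide_eq_false_iff_not, not_le] at hdesc
  omega
end

section
/- For n ≥ 1 and k ≥ 1, there exists a weakly flattened Fubini ranking of length n with exactly k runs of weak ascents if and only if k ≤ ⌈n/2⌉. -/
/-! ### Auxiliary lemmas -/

lemma runsAux_shape (R : ℕ → ℕ → Bool) (a : ℕ) (l : List ℕ) :
    ∃ r rest, runsAux R a l = (a :: r) :: rest := by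
  induction l generalizing a with
  | nil => exact ⟨[], [], rfl⟩
  | cons b l ih =>
    obtain ⟨r, rest, h⟩ := ih b
    by_cases hab : R a b
    · exact ⟨b :: r, rest, by simp [runsAux, h, hab]⟩
    · exact ⟨[], (b :: r) :: rest, by simp [runsAux, h, hab]⟩

lemma runsAux_cons_pos (R : ℕ → ℕ → Bool) (a b : ℕ) (l : List ℕ) (h : R a b = true) :
    runsAux R a (b :: l) = (a :: (runsAux R b l).headI) :: (runsAux R b l).tail := by
  obtain ⟨r, rest, hs⟩ := runsAux_shape R b l
  simp [runsAux, hs, h]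

lemma runsAux_cons_neg (R : ℕ → ℕ → Bool) (a b : ℕ) (l : List ℕ) (h : R a b = false) :
    runsAux R a (b :: l) = [a] :: runsAux R b l := by
  obtain ⟨r, rest, hs⟩ := runsAux_shape R b l
  simp [runsAux, hs, h]

lemma runsAux_flatten (R : ℕ → ℕ → Bool) (a : ℕ) (l : List ℕ) :
    (runsAux R a l).flatten = a :: l := by
  induction l generalizing a with
  | nil => rfl
  | cons b l ih =>
    obtain ⟨r, rest, h⟩ := runsAux_shape R b l
    by_cases hab : R a b
    · rw [runsAux_cons_pos R a b l hab]
      have := ih b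
      rw [h] at this ⊢
      simpa using this
    · rw [runsAux_cons_neg R a b l (by simpa using hab)]
      simp [ih b]

lemma runsAux_ne_nil (R : ℕ → ℕ → Bool) (a : ℕ) (l : List ℕ) :
    ∀ r ∈ runsAux R a l, r ≠ [] := by
  induction l generalizing a with
  | nil => simp [runsAux]
  | cons b l ih =>
    by_cases hab : R a b
    · rw [runsAux_cons_pos R a b l hab]
      intro r hr
      rcases List.mem_cons.mp hr with h | h
      · simp [h]
      · exact ih b r (List.mem_of_mem_tail h)
    · rw [runsAux_cons_neg R a b l (by simpa using hab)]
      intro r hr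
      rcases List.mem_cons.mp hr with h | h
      · simp [h]
      · exact ih b r h

lemma getLastI_cc (a b : ℕ) (l : List ℕ) : (a :: b :: l).getLastI = (b :: l).getLastI := by
  simp [List.getLastI_eq_getLast?, List.getLast?_cons_cons]

lemma runsAux_descents (R : ℕ → ℕ → Bool) (a : ℕ) (l : List ℕ) :
    (runsAux R a l).Chain' (fun r r' => R r.getLastI r'.headI = false) := by
  induction l generalizing a with
  | nil => simp [runsAux, List.Chain']
  | cons b l ih =>
    obtain ⟨r, rest, h⟩ := runsAux_shape R b l
    by_cases hab : R a b
    · rw [runsAux_cons_pos R a b l hab, h]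
      have := ih b; rw [h] at this
      simp only [List.headI_cons, List.tail_cons]
      rcases rest with _ | ⟨r', rest'⟩
      · simp [List.Chain']
      · simp only [List.Chain', List.isChain_cons_cons] at this ⊢
        refine ⟨?_, this.2⟩
        simpa [getLastI_cc] using this.1
    · rw [runsAux_cons_neg R a b l (by simpa using hab), h]
      refine List.isChain_cons_cons.mpr ⟨?_, by rw [← h]; exact ih b⟩
      simpa [List.getLastI_eq_getLast?] using hab

lemma sum_bound : ∀ rs : List (List ℕ), (∀ r ∈ rs, r ≠ []) →
    rs.Chain' (fun r r' => ¬ (r.getLastI ≤ r'.headI)) →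
    (rs.map List.headI).Chain' (· ≤ ·) →
    2 * rs.length ≤ (rs.map List.length).sum + 1
  | [], _, _, _ => by simp
  | [r], hne, _, _ => by
      have : 1 ≤ r.length := List.length_pos_iff.mpr (hne r (by simp))
      simp; omega
  | r :: r' :: rest, hne, hd, hl => by
      have h1 : ¬ (r.getLastI ≤ r'.headI) := (List.isChain_cons_cons.mp hd).1
      have h2 : r.headI ≤ r'.headI := (List.isChain_cons_cons.mp (by simpa [List.Chain'] using hl)).1
      have hr2 : 2 ≤ r.length := by
        rcases r with _ | ⟨x, _ | ⟨y, t⟩⟩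
        · exact absurd rfl (hne _ (by simp))
        · exact absurd h2 (by simpa [List.getLastI] using h1)
        · simp
      have ih := sum_bound (r' :: rest) (fun s hs => hne s (List.mem_cons_of_mem _ hs))
        (List.isChain_cons_cons.mp hd).2 (List.isChain_cons_cons.mp (by simpa [List.Chain'] using hl)).2
      simp only [List.map_cons, List.sum_cons, List.length_cons] at ih ⊢
      omega

/-- The relation of weak ascent. -/
def leB : ℕ → ℕ → Bool := fun a b => decide (a ≤ b)

/-- pairs `s+2, s+1, s+4, s+3, ...` (`j` pairs). -/
def QQ : ℕ → ℕ → List ℕ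
  | _, 0 => []
  | s, j+1 => (s+2) :: (s+1) :: QQ (s+2) j

lemma QQ_length (j : ℕ) : ∀ s, (QQ s j).length = 2 * j := by
  induction j with
  | zero => intro s; rfl
  | succ j ih => intro s; simp [QQ, ih]; omega

lemma QQ_mem (j : ℕ) : ∀ s x, x ∈ QQ s j → s + 1 ≤ x ∧ x ≤ s + 2 * j := by
  induction j with
  | zero => simp [QQ]
  | succ j ih =>
    intro s x hx
    simp only [QQ, List.mem_cons] at hx
    rcases hx with h | h | h
    · omega
    · omega
    · have := ih (s+2) x h; omega

lemma QQ_countP (j : ℕ) : ∀ s v, s < v → v ≤ s + 2 * j →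
    (QQ s j).countP (fun x => decide (x < v)) = v - s - 1 := by
  induction j with
  | zero => intro s v h1 h2; omega
  | succ j ih =>
    intro s v h1 h2
    simp only [QQ, List.countP_cons]
    by_cases hv : s + 3 ≤ v
    · have := ih (s+2) v (by omega) (by omega)
      rw [this]
      simp only [decide_eq_true_eq]
      rw [if_pos (by omega), if_pos (by omega)]
      omega
    · have h0 : (QQ (s+2) j).countP (fun x => decide (x < v)) = 0 := by
        rw [List.countP_eq_zero]
        intro x hx
        have := QQ_mem j (s+2) x hx
        simp only [decide_eq_true_eq]
        omega
      rw [h0]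
      simp only [decide_eq_true_eq]
      split_ifs <;> omega

lemma runsAux_QQ (j : ℕ) : ∀ s a, a ≤ s + 2 →
    ∃ r rest, runsAux leB a (QQ (s+1) j) = (a :: r) :: rest ∧ rest.length = j ∧
      List.Chain' (· ≤ ·) (a :: rest.map List.headI) := by
  induction j with
  | zero => intro s a _; exact ⟨[], [], rfl, rfl, by simp [List.Chain']⟩
  | succ j ih =>
    intro s a ha
    obtain ⟨r', rest', h', hlen, hch⟩ := ih (s+2) (s+2) (by omega)
    have e1 : runsAux leB (s+3) ((s+2) :: QQ (s+3) j) = [s+3] :: (((s+2) :: r') :: rest') := by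
      rw [runsAux_cons_neg leB (s+3) (s+2) _ (by simp [leB])]
      rw [show s + 3 = s + 2 + 1 from rfl] at *
      rw [h']
    have e2 : runsAux leB a (QQ (s+1) (j+1)) = (a :: [s+3]) :: (((s+2) :: r') :: rest') := by
      show runsAux leB a ((s+3) :: (s+2) :: QQ (s+3) j) = _
      rw [runsAux_cons_pos leB a (s+3) _ (by simp [leB]; omega), e1]
      rfl
    exact ⟨[s+3], ((s+2) :: r') :: rest', e2, by simp [hlen],
      by simp only [List.map_cons, List.headI_cons]
         exact List.isChain_cons_cons.mpr ⟨by omega, hch⟩⟩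

lemma runsAux_replicate (R : ℕ → ℕ → Bool) (a : ℕ) (hR : R a a = true) :
    ∀ (m : ℕ) (l : List ℕ), runsAux R a (List.replicate m a ++ l) =
      (List.replicate m a ++ (runsAux R a l).headI) :: (runsAux R a l).tail := by
  intro m
  induction m with
  | zero =>
    intro l
    obtain ⟨r, rest, h⟩ := runsAux_shape R a l
    simp [h]
  | succ m ih =>
    intro l
    rw [List.replicate_succ, List.cons_append, runsAux_cons_pos R a a _ hR, ih l]
    simp

lemma countP_replicate' (p : ℕ → Bool) (m x : ℕ) :
    (List.replicate m x).countP p = if p x then m else 0 := by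
  induction m with
  | zero => simp
  | succ m ih =>
    rw [List.replicate_succ, List.countP_cons, ih]
    split_ifs <;> simp_all

theorem wflat_wruns_exists_iff (n k : ℕ) (hn : 1 ≤ n) (hk : 1 ≤ k) :
    (∃ l : List ℕ, IsFubini n l ∧ WeaklyFlattenedWeak l ∧
      (weakRuns l).length = k) ↔ k ≤ (n + 1) / 2 := by
  constructor
  · rintro ⟨l, ⟨hlen, _, _⟩, hflat, hruns⟩
    rcases l with _ | ⟨a, l'⟩
    · simp at hlen; omega
    have hwr : weakRuns (a :: l') = runsAux leB a l' := rfl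
    have hne := runsAux_ne_nil leB a l'
    have hd : (runsAux leB a l').Chain' (fun r r' => ¬ (r.getLastI ≤ r'.headI)) := by
      have := runsAux_descents leB a l'
      exact List.IsChain.imp (fun r r' h => by simpa [leB] using h) this
    have hl : ((runsAux leB a l').map List.headI).Chain' (· ≤ ·) := by
      have := hflat
      rw [WeaklyFlattenedWeak, leadingTerms, hwr] at this
      exact this
    have hsum := sum_bound (runsAux leB a l') hne hd hl
    have hflatlen : ((runsAux leB a l').map List.length).sum = n := by
      have h1 := runsAux_flatten leB a l'
      have h2 : (runsAux leB a l').flatten.length = (a :: l').length := by rw [h1]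
      rw [List.length_flatten] at h2
      rw [h2, hlen]
    have hk' : (runsAux leB a l').length = k := by rw [← hwr]; exact hruns
    rw [hflatlen, hk'] at hsum
    omega
  · intro hkn
    have h2k : 2 * k ≤ n + 1 := by omega
    obtain ⟨j, rfl⟩ : ∃ j, k = j + 1 := ⟨k - 1, by omega⟩
    set t : ℕ := n - 2 * j with ht
    have htn : n = t + 2 * j := by omega
    have ht1 : 1 ≤ t := by omega
    refine ⟨List.replicate t 1 ++ QQ t j, ⟨?_, ?_, ?_⟩, ?_, ?_⟩
    · simp [QQ_length]; omega
    · intro x hx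
      rcases List.mem_append.mp hx with h | h
      · have := List.eq_of_mem_replicate h; omega
      · have := QQ_mem j t x h; omega
    · intro v hv
      rw [List.countP_append, countP_replicate']
      rcases List.mem_append.mp hv with h | h
      · have hv1 : v = 1 := List.eq_of_mem_replicate h
        subst hv1
        rw [if_neg (by simp)]
        have h0 : (QQ t j).countP (fun x => decide (x < 1)) = 0 := by
          rw [List.countP_eq_zero]
          intro x hx
          have := QQ_mem j t x hx
          simp only [decide_eq_true_eq]
          omega
        rw [h0]
      · have hb := QQ_mem j t v h
        rw [if_pos (by simp; omega), QQ_countP j t v (by omega) (by omega)]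
        omega
    all_goals {
      obtain ⟨r, rest, hq, hrest, hch⟩ := runsAux_QQ j (t - 1) 1 (by omega)
      rw [show t - 1 + 1 = t from by omega] at hq
      have hrep : List.replicate t 1 ++ QQ t j =
          1 :: (List.replicate (t-1) 1 ++ QQ t j) := by
        rw [show t = (t-1) + 1 from by omega, List.replicate_succ, List.cons_append]
        simp
      have hwr : weakRuns (List.replicate t 1 ++ QQ t j) =
          (List.replicate (t-1) 1 ++ (1 :: r)) :: rest := by
        rw [hrep]
        show runsAux leB 1 _ = _
        rw [runsAux_replicate leB 1 (by simp [leB]) (t-1) (QQ t j), hq]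
        simp
      first
      | (rw [WeaklyFlattenedWeak, leadingTerms, hwr]
         simp only [List.map_cons]
         have hhead : (List.replicate (t-1) 1 ++ (1 :: r)).headI = 1 := by
           rcases ht' : (t-1) with _ | m
           · simp
           · simp [List.replicate_succ]
         rw [hhead]
         simpa using hch)
      | (rw [hwr]; simp [hrest])
    }
end

section
/- If a flattened Fubini ranking with runs of (strict) ascents has reduced content (a_1,...,a_k), then a_i ≤ i for all 1 ≤ i ≤ k. In particular a_1 = 1, i.e., the value 1 appears exactly once. -/
private lemma runsAux_spec_s12 (R : ℕ → ℕ → Bool) :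
    ∀ (l : List ℕ) (a : ℕ), (∃ t rest, runsAux R a l = (a :: t) :: rest) ∧
      (runsAux R a l).flatten = a :: l ∧
      ∀ c ∈ runsAux R a l, c ≠ [] ∧ c.Chain' (fun x y => R x y = true)
  | [], a => by
      refine ⟨⟨[], [], rfl⟩, rfl, ?_⟩
      intro c hc
      rw [runsAux, List.mem_singleton] at hc
      subst hc; exact ⟨by simp, List.isChain_singleton _⟩
  | b :: l, a => by
      obtain ⟨⟨t, rest, h1⟩, h2, h3⟩ := runsAux_spec_s12 R l b
      by_cases hR : R a b = true
      · have heq : runsAux R a (b :: l) = (a :: b :: t) :: rest := by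
          rw [runsAux, h1]; simp [hR]
        refine ⟨⟨b :: t, rest, heq⟩, ?_, ?_⟩
        · rw [heq]
          have h2' := h2; rw [h1] at h2'
          simpa using h2'
        · rw [heq]; intro c hc
          rcases List.mem_cons.mp hc with rfl | hc
          · refine ⟨by simp, ?_⟩
            unfold List.Chain'; rw [List.isChain_cons_cons]
            exact ⟨hR, (h3 _ (h1 ▸ List.mem_cons_self)).2⟩
          · exact h3 _ (h1 ▸ List.mem_cons_of_mem _ hc)
      · have heq : runsAux R a (b :: l) = [a] :: (b :: t) :: rest := by
          rw [runsAux, h1]; simp [hR]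
        refine ⟨⟨[], (b :: t) :: rest, heq⟩, ?_, ?_⟩
        · rw [heq]
          have h2' := h2; rw [h1] at h2'
          simpa using h2'
        · rw [heq]; intro c hc
          rcases List.mem_cons.mp hc with rfl | hc
          · exact ⟨by simp, List.isChain_singleton _⟩
          · exact h3 _ (h1 ▸ hc)

private lemma runs_flatten (R : ℕ → ℕ → Bool) (l : List ℕ) : (runs R l).flatten = l := by
  cases l with
  | nil => rfl
  | cons a l => exact (runsAux_spec_s12 R l a).2.1

private lemma runs_props (R : ℕ → ℕ → Bool) (l : List ℕ) :
    ∀ c ∈ runs R l, c ≠ [] ∧ c.Chain' (fun x y => R x y = true) := by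
  cases l with
  | nil => intro c hc; simp [runs] at hc
  | cons a l => exact (runsAux_spec_s12 R l a).2.2

private lemma strictRuns_pairwise (l : List ℕ) :
    ∀ c ∈ strictRuns l, c ≠ [] ∧ c.Pairwise (· < ·) := by
  intro c hc
  obtain ⟨h1, h2⟩ := runs_props _ l c hc
  refine ⟨h1, ?_⟩
  rw [← List.isChain_iff_pairwise]
  exact (show List.IsChain _ c from h2).imp (fun {x y} h => of_decide_eq_true h)

private lemma sum_count_le_filter_length (v : ℕ) (L : List (List ℕ))
    (hnd : ∀ c ∈ L, c.Nodup) :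
    (L.map (List.count v)).sum ≤ (L.filter (fun c => decide (v ∈ c))).length := by
  induction L with
  | nil => simp
  | cons c L ih =>
    have ihc := ih (fun d hd => hnd d (List.mem_cons_of_mem _ hd))
    simp only [List.map_cons, List.sum_cons, List.filter_cons]
    by_cases hv : v ∈ c
    · have h1 : List.count v c ≤ 1 :=
        List.nodup_iff_count_le_one.mp (hnd c List.mem_cons_self) v
      rw [if_pos (by simpa using hv), List.length_cons]
      omega
    · rw [if_neg (by simpa using hv), List.count_eq_zero.mpr hv]
      omega

theorem flat_runs_reducedContent_le (n : ℕ) (l a : List ℕ)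
    (hf : IsFubini n l) (hfl : FlattenedStrict l)
    (ha : reducedContent l = a) :
    (∀ i (h : i < a.length), a[i] ≤ i + 1) ∧
    (∀ h : 0 < a.length, a[0] = 1 ∧ l.count 1 = 1) := by
  subst ha
  set s : List ℕ := l.toFinset.sort (· ≤ ·) with hs
  have hsort : s.Pairwise (· < ·) := (Finset.sortedLT_sort _).pairwise
  have hsp : s.Pairwise (· < ·) := hsort
  have hmono : ∀ i j (hi : i < s.length) (hj : j < s.length), i < j → s[i] < s[j] :=
    fun i j hi hj hij => List.pairwise_iff_getElem.mp hsp i j hi hj hij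
  have hmemS : ∀ x, x ∈ s ↔ x ∈ l := by
    intro x; rw [hs, Finset.mem_sort, List.mem_toFinset]
  have hlen : (reducedContent l).length = s.length := by
    simp [reducedContent, hs]
  have hget : ∀ i (h : i < s.length), (reducedContent l)[i]'(hlen ▸ h) = l.count s[i] := by
    intro i h
    simp [reducedContent, hs]
  -- key bound
  have key : ∀ i (h : i < s.length), l.count s[i] ≤ i + 1 := by
    intro i hi
    set v := s[i] with hv
    have hruns := strictRuns_pairwise l
    -- count over runs
    have h1 : l.count v = ((strictRuns l).map (List.count v)).sum := by
      conv_lhs => rw [← runs_flatten (fun a b => decide (a < b)) l]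
      exact List.count_flatten
    have h2 : ((strictRuns l).map (List.count v)).sum ≤
        ((strictRuns l).filter (fun c => decide (v ∈ c))).length :=
      sum_count_le_filter_length v _ (fun c hc => ((hruns c hc).2).nodup)
    -- injective head map
    set F := (strictRuns l).filter (fun c => decide (v ∈ c)) with hF
    have hFsub : F.Sublist (strictRuns l) := List.filter_sublist
    have hheads : (F.map List.headI).Pairwise (· < ·) := by
      have : ((strictRuns l).map List.headI).Pairwise (· < ·) :=
        List.isChain_iff_pairwise.mp hfl
      exact this.sublist (hFsub.map List.headI)
    have hND : (F.map List.headI).Nodup := hheads.imp ne_of_lt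
    -- heads are in l and ≤ v
    have hsubset : (F.map List.headI) ⊆ s.filter (fun w => decide (w ≤ v)) := by
      intro x hx
      obtain ⟨c, hc, hcx⟩ := List.mem_map.mp hx
      have hcF := hc
      rw [hF, List.mem_filter] at hcF
      obtain ⟨hcr, hvc⟩ := hcF
      have hvc' : v ∈ c := by simpa using hvc
      obtain ⟨hne, hpw⟩ := hruns c hcr
      obtain ⟨hd, tl, rfl⟩ := List.exists_cons_of_ne_nil hne
      have hhl : hd ∈ l := by
        rw [← runs_flatten (fun a b => decide (a < b)) l]
        exact List.mem_flatten.mpr ⟨_, hcr, List.mem_cons_self⟩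
      have hhv : hd ≤ v := by
        rcases List.mem_cons.mp hvc' with h | h
        · omega
        · exact le_of_lt ((List.pairwise_cons.mp hpw).1 v h)
      rw [List.mem_filter, ← hcx]
      simp only [List.headI]
      exact ⟨(hmemS hd).mpr hhl, decide_eq_true hhv⟩
    have h3 : (F.map List.headI).length ≤ (s.filter (fun w => decide (w ≤ v))).length :=
      (hND.subperm hsubset).length_le
    -- filter length ≤ i+1
    have h4 : (s.filter (fun w => decide (w ≤ v))).length ≤ i + 1 := by
      conv_lhs => rw [← List.take_append_drop (i + 1) s, List.filter_append]
      rw [List.length_append]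
      have hdrop : (s.drop (i + 1)).filter (fun w => decide (w ≤ v)) = [] := by
        rw [List.filter_eq_nil_iff]
        intro x hx
        obtain ⟨j, hj, hjx⟩ := List.mem_iff_getElem.mp hx
        rw [List.getElem_drop] at hjx
        have hjlen : i + 1 + j < s.length := by
          have := hj; rw [List.length_drop] at this; omega
        have : v < x := by
          rw [← hjx, hv]
          exact hmono i (i + 1 + j) hi hjlen (by omega)
        simp; omega
      rw [hdrop]
      simp only [List.length_nil, Nat.add_zero]
      calc ((s.take (i+1)).filter _).length ≤ (s.take (i+1)).length :=
            List.length_filter_le _ _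
        _ ≤ i + 1 := by rw [List.length_take]; omega
    have hFlen : (F.map List.headI).length = F.length := List.length_map _
    omega
  constructor
  · intro i hi
    rw [hlen] at hi
    rw [hget i hi]
    exact key i hi
  · intro h0
    rw [hlen] at h0
    rw [hget 0 h0]
    -- s[0] is the minimum and equals 1
    have hs0l : s[0] ∈ l := (hmemS _).mp (List.getElem_mem _)
    have hmin : ∀ w ∈ l, s[0] ≤ w := by
      intro w hw
      obtain ⟨j, hj, hjw⟩ := List.mem_iff_getElem.mp ((hmemS w).mpr hw)
      rcases Nat.eq_zero_or_pos j with rfl | hjpos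
      · omega
      · have := hmono 0 j h0 hj hjpos; omega
    have hs01 : s[0] = 1 := by
      have hP : l.countP (fun x => decide (x < s[0])) = 0 := by
        rw [List.countP_eq_zero]
        intro w hw
        have := hmin w hw
        simp; omega
      have := hf.2.2 s[0] hs0l
      rw [hP] at this
      omega
    have hle : l.count s[0] ≤ 1 := by have := key 0 h0; omega
    have hge : 1 ≤ l.count s[0] := List.count_pos_iff.mpr hs0l
    refine ⟨by omega, ?_⟩
    rw [← hs01]
    omega
end

section
/- For any composition a = (a_1,...,a_k) of n with all positive parts and a_1 ≥ 2, the number of weakly flattened Fubini rankings of length n with runs of weak ascents, with reduced content a, whose last entry equals 1, is the product over i = 2,...,k of binomial(a_1 + a_i - 2, a_i). -/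
namespace List

theorem chain'_cons {α : Type*} {R : α → α → Prop} {a b : α} {l : List α} :
    Chain' R (a :: b :: l) ↔ R a b ∧ Chain' R (b :: l) := isChain_cons_cons

@[simp] theorem chain'_nil {α : Type*} {R : α → α → Prop} : Chain' R [] := isChain_nil

@[simp] theorem chain'_singleton {α : Type*} {R : α → α → Prop} (a : α) : Chain' R [a] :=
  isChain_singleton a

theorem chain'_append {α : Type*} {R : α → α → Prop} {l₁ l₂ : List α} :
    Chain' R (l₁ ++ l₂) ↔ Chain' R l₁ ∧ Chain' R l₂ ∧
      ∀ x ∈ l₁.getLast?, ∀ y ∈ l₂.head?, R x y := isChain_append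

theorem chain'_iff_pairwise {α : Type*} {R : α → α → Prop} [IsTrans α R] {l : List α} :
    Chain' R l ↔ Pairwise R l := by exact isChain_iff_pairwise

end List
namespace WFaux

open List

/-- descent targets -/
def dt (R : ℕ → ℕ → Bool) : ℕ → List ℕ → List ℕ
  | _, [] => []
  | a, b :: l => if R a b then dt R b l else b :: dt R b l

lemma runsAux_shape (R : ℕ → ℕ → Bool) : ∀ (l : List ℕ) (a : ℕ),
    ∃ r rest, runsAux R a l = (a :: r) :: rest
  | [], a => ⟨[], [], rfl⟩
  | b :: l, a => by
    obtain ⟨r, rest, h⟩ := runsAux_shape R l b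
    by_cases hab : R a b
    · exact ⟨b :: r, rest, by simp [runsAux, h, hab]⟩
    · exact ⟨[], (b :: r) :: rest, by simp [runsAux, h, hab]⟩

lemma leadingTerms_runsAux (R : ℕ → ℕ → Bool) : ∀ (l : List ℕ) (a : ℕ),
    leadingTerms (runsAux R a l) = a :: dt R a l
  | [], a => rfl
  | b :: l, a => by
    obtain ⟨r, rest, h⟩ := runsAux_shape R l b
    have ih := leadingTerms_runsAux R l b
    rw [h] at ih
    simp only [leadingTerms, map_cons, headI_cons] at ih
    have h2 : rest.map headI = dt R b l := by
      simpa using ih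
    by_cases hab : R a b
    · simp [runsAux, h, hab, leadingTerms, dt, h2]
    · simp [runsAux, h, hab, leadingTerms, dt, h2]

abbrev Rw : ℕ → ℕ → Bool := fun a b => decide (a ≤ b)

/-- the key pairwise relation -/
def Rel (x y : ℕ) : Prop := x ≤ y ∨ y = 1

lemma mem_dt : ∀ (l : List ℕ) (a y : ℕ), y ∈ dt Rw a l → y ∈ l
  | [], _, _, h => by simp [dt] at h
  | b :: l, a, y, h => by
    by_cases hab : a ≤ b
    · rw [show dt Rw a (b :: l) = dt Rw b l by simp [dt, hab]] at h
      exact mem_cons_of_mem _ (mem_dt l b y h)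
    · rw [show dt Rw a (b :: l) = b :: dt Rw b l by simp [dt, hab], mem_cons] at h
      rcases h with rfl | h
      · exact mem_cons_self
      · exact mem_cons_of_mem _ (mem_dt l b y h)

lemma chain'_rel_iff_dt : ∀ (l : List ℕ) (a : ℕ),
    List.Chain' Rel (a :: l) ↔ ∀ y ∈ dt Rw a l, y = 1
  | [], a => by simp [dt]
  | b :: l, a => by
    rw [List.chain'_cons, chain'_rel_iff_dt l b]
    by_cases hab : a ≤ b
    · have hr : Rel a b := Or.inl hab
      rw [show dt Rw a (b :: l) = dt Rw b l by simp [dt, hab]]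
      simp [hr]
    · rw [show dt Rw a (b :: l) = b :: dt Rw b l by simp [dt, hab]]
      simp only [mem_cons]
      unfold Rel
      constructor
      · rintro ⟨h1 | h1, h2⟩ y hy
        · exact absurd h1 hab
        · rcases hy with rfl | hy
          · exact h1
          · exact h2 y hy
      · intro h
        exact ⟨Or.inr (h b (Or.inl rfl)), fun y hy => h y (Or.inr hy)⟩

lemma dt_nil_le_getLast : ∀ (l : List ℕ) (a : ℕ), dt Rw a l = [] →
    a ≤ (a :: l).getLast (cons_ne_nil _ _)
  | [], a, _ => le_refl _
  | b :: l, a, h => by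
    by_cases hab : a ≤ b
    · rw [show dt Rw a (b :: l) = dt Rw b l by simp [dt, hab]] at h
      have := dt_nil_le_getLast l b h
      rw [List.getLast_cons (cons_ne_nil _ _)]
      exact le_trans hab this
    · simp [dt, hab] at h

lemma getLast_cons_dt_le : ∀ (l : List ℕ) (a : ℕ),
    (a :: dt Rw a l).getLast (cons_ne_nil _ _) ≤ (a :: l).getLast (cons_ne_nil _ _)
  | [], a => le_refl _
  | b :: l, a => by
    have ih := getLast_cons_dt_le l b
    by_cases hab : a ≤ b
    · have hdt : dt Rw a (b :: l) = dt Rw b l := by simp [dt, hab]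
      rw [hdt]
      rcases eq_or_ne (dt Rw b l) [] with hnil | hnil
      · rw [hnil]
        simp only [getLast_singleton]
        rw [List.getLast_cons (cons_ne_nil _ _)]
        exact le_trans hab (dt_nil_le_getLast l b hnil)
      · rw [List.getLast_cons hnil, List.getLast_cons (cons_ne_nil _ _)]
        rw [List.getLast_cons hnil] at ih
        exact ih
    · have hdt : dt Rw a (b :: l) = b :: dt Rw b l := by simp [dt, hab]
      rw [hdt]
      rw [List.getLast_cons (cons_ne_nil _ _), List.getLast_cons (cons_ne_nil _ _)]
      exact ih

lemma chain'_le_all_le_getLast : ∀ (l : List ℕ) (h : l ≠ []), List.Chain' (· ≤ ·) l →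
    ∀ x ∈ l, x ≤ l.getLast h
  | [], h, _ => absurd rfl h
  | [a], _, _ => by simp
  | a :: b :: l, _, hch => by
    rw [List.chain'_cons] at hch
    intro x hx
    rw [List.getLast_cons (cons_ne_nil _ _)]
    rw [mem_cons] at hx
    rcases hx with rfl | hx
    · exact le_trans hch.1
        (chain'_le_all_le_getLast (b :: l) (cons_ne_nil _ _) hch.2 b (mem_cons_self))
    · exact chain'_le_all_le_getLast (b :: l) (cons_ne_nil _ _) hch.2 x hx

lemma chain'_le_of_all_one {l : List ℕ} (h : ∀ x ∈ l, x = 1) : List.Chain' (· ≤ ·) l := by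
  induction l with
  | nil => exact List.chain'_nil
  | cons a l ih =>
    cases l with
    | nil => simp
    | cons b l =>
      rw [List.chain'_cons]
      refine ⟨?_, ih (fun x hx => h x (mem_cons_of_mem _ hx))⟩
      rw [h a (mem_cons_self), h b (mem_cons_of_mem _ (mem_cons_self))]

/-- Characterization of weakly flattened (weak runs) for lists ending in 1. -/
lemma wfw_iff {l : List ℕ} (h1 : ∀ x ∈ l, 1 ≤ x) (h2 : l.getLast? = some 1) :
    WeaklyFlattenedWeak l ↔ (l.headI = 1 ∧ List.Chain' Rel l) := by
  obtain ⟨a, l', rfl⟩ : ∃ a l', l = a :: l' := by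
    cases l with
    | nil => simp at h2
    | cons a l' => exact ⟨a, l', rfl⟩
  have hlast : (a :: l').getLast (cons_ne_nil _ _) = 1 := by
    rw [List.getLast?_eq_getLast (cons_ne_nil _ _)] at h2
    exact Option.some_injective _ h2
  unfold WeaklyFlattenedWeak weakRuns runs
  rw [leadingTerms_runsAux]
  constructor
  · intro hch
    have hle : (a :: dt Rw a l').getLast (cons_ne_nil _ _) ≤ 1 := by
      rw [← hlast]; exact getLast_cons_dt_le l' a
    have hall : ∀ x ∈ a :: dt Rw a l', x = 1 := by
      intro x hx
      rw [mem_cons] at hx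
      have hge : 1 ≤ x := by
        rcases hx with rfl | hx
        · exact h1 _ (mem_cons_self)
        · exact h1 x (mem_cons_of_mem _ (mem_dt _ _ x hx))
      have hx' : x ∈ a :: dt Rw a l' := by
        rw [mem_cons]; exact hx.imp id id
      have := le_trans (chain'_le_all_le_getLast _ (cons_ne_nil _ _) hch x hx') hle
      omega
    refine ⟨hall a (mem_cons_self), ?_⟩
    rw [chain'_rel_iff_dt]
    exact fun y hy => hall y (mem_cons_of_mem _ hy)
  · rintro ⟨ha, hch⟩
    rw [chain'_rel_iff_dt] at hch
    apply chain'_le_of_all_one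
    intro x hx
    rw [mem_cons] at hx
    rcases hx with rfl | hx
    · simpa using ha
    · exact hch x hx

end WFaux
namespace WFaux
open List

/-- canonical form: blocks `1 :: w` then a final `1`. -/
def blockform : List (List ℕ) → List ℕ
  | [] => [1]
  | w :: ws => 1 :: (w ++ blockform ws)

lemma blockform_eq_cons : ∀ ws : List (List ℕ), ∃ r, blockform ws = 1 :: r
  | [] => ⟨[], rfl⟩
  | w :: ws => ⟨w ++ blockform ws, rfl⟩

lemma blockform_ne_nil (ws : List (List ℕ)) : blockform ws ≠ [] := by
  obtain ⟨r, hr⟩ := blockform_eq_cons ws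
  simp [hr]

lemma head?_blockform (ws : List (List ℕ)) : (blockform ws).head? = some 1 := by
  obtain ⟨r, hr⟩ := blockform_eq_cons ws
  simp [hr]

lemma headI_blockform (ws : List (List ℕ)) : (blockform ws).headI = 1 := by
  obtain ⟨r, hr⟩ := blockform_eq_cons ws
  simp [hr]

lemma getLast?_blockform : ∀ ws : List (List ℕ), (blockform ws).getLast? = some 1
  | [] => rfl
  | w :: ws => by
    show (1 :: (w ++ blockform ws)).getLast? = some 1
    rw [show (1 :: (w ++ blockform ws)) = (1 :: w) ++ blockform ws by simp,
      getLast?_append_of_ne_nil _ (blockform_ne_nil ws)]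
    exact getLast?_blockform ws

lemma count_blockform (x : ℕ) (hx : x ≠ 1) : ∀ ws : List (List ℕ),
    (blockform ws).count x = (ws.map (fun w => w.count x)).sum
  | [] => by simp [blockform, count_singleton, hx, Ne.symm hx]
  | w :: ws => by
    show (1 :: (w ++ blockform ws)).count x = _
    rw [count_cons, count_append, count_blockform x hx ws]
    simp [hx, Ne.symm hx]

lemma count_one_blockform : ∀ ws : List (List ℕ), (∀ w ∈ ws, ∀ y ∈ w, y ≠ 1) →
    (blockform ws).count 1 = ws.length + 1
  | [], _ => by simp [blockform]
  | w :: ws, h => by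
    show (1 :: (w ++ blockform ws)).count 1 = _
    rw [count_cons, count_append,
      count_one_blockform ws (fun w' hw' => h w' (mem_cons_of_mem _ hw'))]
    have : w.count 1 = 0 := by
      rw [count_eq_zero]
      exact fun h1 => h w (mem_cons_self) 1 h1 rfl
    simp [this]

lemma mem_blockform {x : ℕ} : ∀ {ws : List (List ℕ)},
    x ∈ blockform ws ↔ x = 1 ∨ ∃ w ∈ ws, x ∈ w
  | [] => by simp [blockform]
  | w :: ws => by
    show x ∈ 1 :: (w ++ blockform ws) ↔ _
    simp only [mem_cons, mem_append, mem_blockform (ws := ws)]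
    constructor
    · rintro (rfl | hw | (rfl | ⟨w', hw', hx⟩))
      · exact Or.inl rfl
      · exact Or.inr ⟨w, Or.inl rfl, hw⟩
      · exact Or.inl rfl
      · exact Or.inr ⟨w', Or.inr hw', hx⟩
    · rintro (rfl | ⟨w', rfl | hw', hx⟩)
      · exact Or.inl rfl
      · exact Or.inr (Or.inl hx)
      · exact Or.inr (Or.inr (Or.inr ⟨w', hw', hx⟩))

lemma chain'_rel_one_cons {w : List ℕ} (hch : List.Chain' (· ≤ ·) w)
    (hge : ∀ y ∈ w, 1 ≤ y) : List.Chain' Rel (1 :: w) := by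
  cases w with
  | nil => simp
  | cons b w' =>
    rw [List.chain'_cons]
    exact ⟨Or.inl (hge b (mem_cons_self)), hch.imp (fun _ _ h => Or.inl h)⟩

lemma chain'_rel_blockform : ∀ ws : List (List ℕ),
    (∀ w ∈ ws, List.Chain' (· ≤ ·) w ∧ ∀ y ∈ w, 1 ≤ y) →
    List.Chain' Rel (blockform ws)
  | [], _ => by simp [blockform]
  | w :: ws, h => by
    show List.Chain' Rel ((1 :: w) ++ blockform ws)
    rw [List.chain'_append]
    refine ⟨chain'_rel_one_cons (h w (mem_cons_self)).1 (h w (mem_cons_self)).2,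
      chain'_rel_blockform ws (fun w' hw' => h w' (mem_cons_of_mem _ hw')), ?_⟩
    intro x _ y hy
    rw [head?_blockform] at hy
    rw [Option.mem_some_iff] at hy
    exact Or.inr hy.symm

lemma append_one_inj : ∀ (w w' r r' : List ℕ), (∀ x ∈ w, x ≠ 1) → (∀ x ∈ w', x ≠ 1) →
    w ++ 1 :: r = w' ++ 1 :: r' → w = w' ∧ r = r'
  | [], [], r, r', _, _, h => by simpa using h
  | [], x :: w', r, r', _, h2, h => by
    simp only [nil_append, cons_append, cons.injEq] at h
    exact absurd h.1.symm (h2 x (mem_cons_self))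
  | x :: w, [], r, r', h1, _, h => by
    simp only [nil_append, cons_append, cons.injEq] at h
    exact absurd h.1 (h1 x (mem_cons_self))
  | x :: w, y :: w', r, r', h1, h2, h => by
    simp only [cons_append, cons.injEq] at h
    obtain ⟨rfl, h⟩ := h
    obtain ⟨hw, hr⟩ := append_one_inj w w' r r'
      (fun z hz => h1 z (mem_cons_of_mem _ hz)) (fun z hz => h2 z (mem_cons_of_mem _ hz)) h
    exact ⟨by rw [hw], hr⟩

lemma blockform_inj : ∀ (ws ws' : List (List ℕ)), (∀ w ∈ ws, ∀ y ∈ w, y ≠ 1) →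
    (∀ w ∈ ws', ∀ y ∈ w, y ≠ 1) → blockform ws = blockform ws' → ws = ws'
  | [], [], _, _, _ => rfl
  | [], w' :: ws', _, _, h => by
    have : ([] : List ℕ) = w' ++ blockform ws' := by
      simpa [blockform] using h
    exact absurd this.symm (by simp [blockform_ne_nil])
  | w :: ws, [], _, _, h => by
    have : ([] : List ℕ) = w ++ blockform ws := by
      simpa [blockform] using h.symm
    exact absurd this.symm (by simp [blockform_ne_nil])
  | w :: ws, w' :: ws', h1, h2, h => by
    obtain ⟨r, hr⟩ := blockform_eq_cons ws
    obtain ⟨r', hr'⟩ := blockform_eq_cons ws'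
    have h' : w ++ 1 :: r = w' ++ 1 :: r' := by
      have : 1 :: (w ++ blockform ws) = 1 :: (w' ++ blockform ws') := h
      rw [hr, hr'] at this
      simpa using this
    obtain ⟨hw, hrr⟩ := append_one_inj w w' r r' (h1 w (mem_cons_self))
      (h2 w' (mem_cons_self)) h'
    have : blockform ws = blockform ws' := by rw [hr, hr', hrr]
    rw [hw, blockform_inj ws ws' (fun u hu => h1 u (mem_cons_of_mem _ hu))
      (fun u hu => h2 u (mem_cons_of_mem _ hu)) this]

lemma chain'_rel_to_le : ∀ {w : List ℕ}, List.Chain' Rel w → (∀ x ∈ w, x ≠ 1) →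
    List.Chain' (· ≤ ·) w
  | [], _, _ => List.chain'_nil
  | [_], _, _ => List.chain'_singleton _
  | a :: b :: w, hch, h => by
    rw [List.chain'_cons] at hch ⊢
    refine ⟨?_, chain'_rel_to_le hch.2 (fun x hx => h x (mem_cons_of_mem _ hx))⟩
    rcases hch.1 with h' | h'
    · exact h'
    · exact absurd h' (h b (mem_cons_of_mem _ (mem_cons_self)))

lemma dropWhile_eq_cons_not {p : ℕ → Bool} : ∀ {l : List ℕ} {b r : _}, List.dropWhile p l = b :: r → p b = false
  | [], b, r, h => by simp at h
  | a :: l, b, r, h => by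
    cases hp : p a with
    | true =>
      rw [dropWhile_cons, if_pos (by simp [hp])] at h
      exact dropWhile_eq_cons_not h
    | false =>
      rw [dropWhile_cons, if_neg (by simp [hp])] at h
      injection h with h1 _
      rw [← h1]
      exact hp

lemma exists_blocks : ∀ (N : ℕ) (l : List ℕ), l.length ≤ N → List.Chain' Rel l →
    (∀ x ∈ l, 1 ≤ x) → l.headI = 1 → l.getLast? = some 1 →
    ∃ ws : List (List ℕ), (∀ w ∈ ws, List.Chain' (· ≤ ·) w ∧ ∀ x ∈ w, x ≠ 1) ∧
      l.count 1 = ws.length + 1 ∧ l = blockform ws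
  | 0, l, hN, _, _, _, hlast => by
    rw [Nat.le_zero, List.length_eq_zero_iff] at hN
    subst hN
    simp at hlast
  | N + 1, l, hN, hch, hge, hhead, hlast => by
    obtain ⟨a, tail, rfl⟩ : ∃ a tail, l = a :: tail := by
      cases l with
      | nil => simp at hlast
      | cons a tail => exact ⟨a, tail, rfl⟩
    obtain rfl : a = 1 := by simpa using hhead
    set w := tail.takeWhile (fun x => decide (x ≠ 1)) with hw
    set r := tail.dropWhile (fun x => decide (x ≠ 1)) with hrd
    have htd : w ++ r = tail := takeWhile_append_dropWhile ..
    have hwne : ∀ x ∈ w, x ≠ 1 := by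
      intro x hx
      have := mem_takeWhile_imp hx
      simpa using this
    cases hr : r with
    | nil =>
      rw [hr] at htd
      simp only [append_nil] at htd
      cases tail with
      | nil => exact ⟨[], by simp, by simp [blockform], rfl⟩
      | cons b tail' =>
        exfalso
        have h1 : (1 :: b :: tail').getLast (cons_ne_nil _ _) = 1 := by
          rw [List.getLast?_eq_getLast (cons_ne_nil _ _)] at hlast
          exact Option.some_injective _ hlast
        have h2 : (1 :: b :: tail').getLast (cons_ne_nil _ _) ∈ b :: tail' := by
          rw [List.getLast_cons (cons_ne_nil _ _)]
          exact getLast_mem _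
        rw [h1] at h2
        rw [← htd] at h2
        exact hwne 1 h2 rfl
    | cons b r₂ =>
      obtain rfl : b = 1 := by
        have h' : tail.dropWhile (fun x => decide (x ≠ 1)) = b :: r₂ := by
          rw [← hrd]; exact hr
        have := dropWhile_eq_cons_not h'
        simpa using this
      have hrl : r.length + 1 ≤ tail.length + 1 := by
        have : r.length ≤ tail.length := by
          rw [← htd, length_append]; omega
        omega
      have hsuf : r <:+ (1 :: tail) := by
        refine ⟨1 :: w, ?_⟩
        simp [htd]
      have hinf : w <:+: (1 :: tail) := by
        refine ⟨[1], r, ?_⟩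
        simp [htd]
      have hlast' : r.getLast? = some 1 := by
        have : (1 :: tail) = (1 :: w) ++ r := by rw [cons_append, htd]
        rw [this, getLast?_append_of_ne_nil _ (by rw [hr]; exact cons_ne_nil _ _)] at hlast
        exact hlast
      obtain ⟨ws₁, hprops, hcount, hbf⟩ := exists_blocks N r
        (by simp only [length_cons] at hN ⊢; omega)
        (hch.suffix hsuf) (fun x hx => hge x (hsuf.subset hx)) (by rw [hr]; rfl) hlast'
      refine ⟨w :: ws₁, ?_, ?_, ?_⟩
      · intro u hu
        rw [mem_cons] at hu
        rcases hu with rfl | hu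
        · exact ⟨chain'_rel_to_le (hch.infix hinf) hwne, hwne⟩
        · exact hprops u hu
      · show (1 :: tail).count 1 = _
        rw [← htd, ← cons_append, count_append]
        have hw0 : (1 :: w).count 1 = 1 := by
          rw [count_cons_self, count_eq_zero.mpr (fun h => hwne 1 h rfl)]
        rw [hw0, hcount]
        simp
        omega
      · show (1 :: tail) = blockform (w :: ws₁)
        show _ = 1 :: (w ++ blockform ws₁)
        rw [← hbf, htd]
end WFaux
namespace WFaux
open List

lemma sum_map_ite (M : List ℕ) (x : ℕ) :
    (M.map (fun y => if x = y then 1 else 0)).sum = M.count x := by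
  induction M with
  | nil => simp
  | cons a M ih =>
    rw [map_cons, sum_cons, ih, count_cons]
    rcases eq_or_ne x a with rfl | h
    · simp [Nat.add_comm]
    · simp [h, h.symm]

lemma sum_map_add (M : List ℕ) (f g : ℕ → ℕ) :
    (M.map (fun y => f y + g y)).sum = (M.map f).sum + (M.map g).sum := by
  induction M with
  | nil => simp
  | cons a M ih =>
    simp only [map_cons, sum_cons, ih]
    omega

lemma countP_eq_sum_counts (L : List ℕ) (hnd : L.Nodup) (p : ℕ → Bool) :
    ∀ (l : List ℕ), (∀ x ∈ l, x ∈ L) →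
      l.countP p = ((L.filter p).map (fun y => l.count y)).sum
  | [], _ => by
    simp only [countP_nil, count_nil]
    induction (L.filter p) with
    | nil => simp
    | cons a M ih => simpa using ih
  | x :: l, hmem => by
    rw [countP_cons, countP_eq_sum_counts L hnd p l (fun y hy => hmem y (mem_cons_of_mem _ hy))]
    have hmc : (L.filter p).map (fun y => (x :: l).count y)
        = (L.filter p).map (fun y => l.count y + if x = y then 1 else 0) := by
      apply map_congr_left
      intro y _
      rw [count_cons]
      simp [beq_iff_eq]
    rw [hmc, sum_map_add, sum_map_ite]
    congr 1
    by_cases hp : p x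
    · have hxf : x ∈ L.filter p := mem_filter.mpr ⟨hmem x (mem_cons_self), hp⟩
      rw [List.count_eq_one_of_mem (hnd.filter p) hxf, hp]
      simp
    · have hxf : x ∉ L.filter p := fun h => hp (of_mem_filter h)
      rw [count_eq_zero.mpr hxf]
      simp [hp]

lemma length_eq_sum_counts (L : List ℕ) (hnd : L.Nodup) (l : List ℕ)
    (hmem : ∀ x ∈ l, x ∈ L) : l.length = (L.map (fun y => l.count y)).sum := by
  have := countP_eq_sum_counts L hnd (fun _ => true) l hmem
  simpa using this

lemma filter_lt_getElem {L : List ℕ} (hs : List.Pairwise (· < ·) L) {j : ℕ} (hj : j < L.length) :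
    L.filter (fun x => decide (x < L[j])) = L.take j := by
  set w := L[j] with hwdef
  conv_lhs => rw [← take_append_drop j L]
  rw [filter_append]
  have h1 : (L.take j).filter (fun x => decide (x < w)) = L.take j := by
    rw [filter_eq_self]
    intro x hx
    rw [mem_iff_getElem] at hx
    obtain ⟨i, hi, rfl⟩ := hx
    rw [getElem_take]
    simp only [decide_eq_true_eq]
    have hij : i < j := by
      rw [length_take] at hi
      omega
    have hi' : i < L.length := lt_of_lt_of_le hij (le_of_lt hj)
    have := hs.rel_get_of_lt (a := ⟨i, hi'⟩) (b := ⟨j, hj⟩) hij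
    simpa [hwdef] using this
  have h2 : (L.drop j).filter (fun x => decide (x < w)) = [] := by
    rw [filter_eq_nil_iff]
    intro x hx
    rw [mem_iff_getElem] at hx
    obtain ⟨i, hi, rfl⟩ := hx
    rw [getElem_drop]
    simp only [decide_eq_true_eq, not_lt]
    rcases Nat.eq_zero_or_pos i with rfl | hpos
    · simp [hwdef]
    · rw [length_drop] at hi
      have hji : j + i < L.length := by omega
      have := hs.rel_get_of_lt (a := ⟨j, hj⟩) (b := ⟨j + i, hji⟩) (by simp; omega)
      simp only [hwdef]
      exact le_of_lt (by simpa using this)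
  rw [h1, h2, append_nil]

lemma countP_lt_getElem (L : List ℕ) (hs : List.Pairwise (· < ·) L) (l : List ℕ)
    (hmem : ∀ x ∈ l, x ∈ L) {j : ℕ} (hj : j < L.length) :
    l.countP (fun x => decide (x < L[j])) = ((L.take j).map (fun y => l.count y)).sum := by
  rw [countP_eq_sum_counts L hs.nodup _ l hmem, filter_lt_getElem hs hj]

end WFaux
namespace WFaux
open List

section Staircase

variable (a₁ : ℕ) (t : List ℕ)

/-- The `i`-th higher staircase value. -/
def V (i : ℕ) : ℕ := 1 + a₁ + (t.take i).sum

/-- All distinct values. -/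
def vals : List ℕ := 1 :: List.ofFn (fun i : Fin t.length => V a₁ t i)

variable {a₁ t}

lemma sum_take_succ_list {i : ℕ} (hi : i < t.length) :
    (t.take (i + 1)).sum = (t.take i).sum + t[i] := by
  rw [List.take_succ, sum_append, List.getElem?_eq_getElem hi]
  simp

lemma sum_take_le_sum_take {i j : ℕ} (hij : i ≤ j) :
    (t.take i).sum ≤ (t.take j).sum := by
  have h : t.take i = (t.take j).take i := by rw [take_take, min_eq_left hij]
  rw [h]
  conv_rhs => rw [← take_append_drop i (t.take j)]
  rw [sum_append]
  omega

lemma V_lt_V (hpos : ∀ x ∈ t, 0 < x) {i j : ℕ} (hij : i < j) (hi : i < t.length) :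
    V a₁ t i < V a₁ t j := by
  have h1 : (t.take (i+1)).sum = (t.take i).sum + t[i] := sum_take_succ_list hi
  have h2 : 0 < t[i] := hpos _ (getElem_mem hi)
  have h3 : (t.take (i+1)).sum ≤ (t.take j).sum := sum_take_le_sum_take hij
  unfold V
  omega

lemma one_lt_V (ha₁ : 2 ≤ a₁) (i : ℕ) : 1 < V a₁ t i := by
  unfold V; omega

lemma V_le_sum (hpos : ∀ x ∈ t, 0 < x) {i : ℕ} (hi : i < t.length) :
    V a₁ t i ≤ a₁ + t.sum := by
  have h1 : (t.take (i+1)).sum = (t.take i).sum + t[i] := sum_take_succ_list hi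
  have h2 : 0 < t[i] := hpos _ (getElem_mem hi)
  have h3 : (t.take (i+1)).sum ≤ (t.take t.length).sum := sum_take_le_sum_take hi
  rw [take_length] at h3
  unfold V
  omega

lemma length_vals : (vals a₁ t).length = t.length + 1 := by simp [vals]

lemma vals_getElem_zero (h : 0 < (vals a₁ t).length) : (vals a₁ t)[0] = 1 := rfl

lemma vals_getElem_succ {i : ℕ} (h : i + 1 < (vals a₁ t).length) :
    (vals a₁ t)[i + 1] = V a₁ t i := by
  have hi : i < t.length := by
    have := length_vals (a₁ := a₁) (t := t)
    omega
  show (List.ofFn (fun i : Fin t.length => V a₁ t i))[i]'(by simpa using hi) = V a₁ t i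
  rw [List.getElem_ofFn]

lemma vals_sorted (ha₁ : 2 ≤ a₁) (hpos : ∀ x ∈ t, 0 < x) :
    List.Pairwise (· < ·) (vals a₁ t) := by
  unfold vals
  rw [pairwise_cons]
  constructor
  · intro b hb
    rw [mem_ofFn] at hb
    obtain ⟨i, rfl⟩ := hb
    exact one_lt_V ha₁ _
  · rw [pairwise_ofFn]
    intro i j hij
    exact V_lt_V hpos hij i.isLt

lemma mem_vals_iff {x : ℕ} : x ∈ vals a₁ t ↔ x = 1 ∨ ∃ i : Fin t.length, x = V a₁ t i := by
  unfold vals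
  simp only [mem_cons, mem_ofFn, Set.mem_range]
  constructor
  · rintro (rfl | ⟨i, rfl⟩)
    · exact Or.inl rfl
    · exact Or.inr ⟨i, rfl⟩
  · rintro (rfl | ⟨i, rfl⟩)
    · exact Or.inl rfl
    · exact Or.inr ⟨i, rfl⟩

lemma sort_toFinset_of_sorted {L : List ℕ} (h : List.Pairwise (· < ·) L) :
    L.toFinset.sort (· ≤ ·) = L :=
  (List.toFinset_sort (· ≤ ·) h.nodup).mpr (h.imp le_of_lt)

lemma map_count_vals {l : List ℕ} (hc1 : l.count 1 = a₁)
    (hcV : ∀ i : Fin t.length, l.count (V a₁ t i) = t.get i) :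
    (vals a₁ t).map (fun y => l.count y) = a₁ :: t := by
  unfold vals
  rw [map_cons, hc1, map_ofFn]
  congr 1
  have : ((fun y => l.count y) ∘ fun i : Fin t.length => V a₁ t i) = fun i => t.get i := by
    funext i
    exact hcV i
  rw [this, List.ofFn_get]

/-- Forward characterization: prescribed counts give Fubini + reduced content. -/
lemma lemma_F (ha₁ : 2 ≤ a₁) (hpos : ∀ x ∈ t, 0 < x) {l : List ℕ}
    (hmem : ∀ x ∈ l, x ∈ vals a₁ t)
    (hc1 : l.count 1 = a₁)
    (hcV : ∀ i : Fin t.length, l.count (V a₁ t i) = t.get i) :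
    IsFubini (a₁ + t.sum) l ∧ reducedContent l = a₁ :: t := by
  have hsorted := vals_sorted ha₁ hpos
  have hmap := map_count_vals hc1 hcV
  have hlength : l.length = a₁ + t.sum := by
    rw [length_eq_sum_counts (vals a₁ t) hsorted.nodup l hmem, hmap]
    simp
  constructor
  · refine ⟨hlength, ?_, ?_⟩
    · intro x hx
      rcases mem_vals_iff.mp (hmem x hx) with rfl | ⟨i, rfl⟩
      · omega
      · have h1 := one_lt_V (t := t) ha₁ (i : ℕ)
        have h2 := V_le_sum (a₁ := a₁) hpos i.isLt
        omega
    · intro v hv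
      obtain ⟨j, hj, rfl⟩ := mem_iff_getElem.mp (hmem v hv)
      rw [countP_lt_getElem (vals a₁ t) hsorted l hmem hj, map_take, hmap]
      cases j with
      | zero => simp [vals_getElem_zero]
      | succ i =>
        rw [vals_getElem_succ hj, take_succ_cons, sum_cons]
        unfold V
        omega
  · have htf : l.toFinset = (vals a₁ t).toFinset := by
      ext x
      rw [mem_toFinset, mem_toFinset]
      constructor
      · exact hmem x
      · intro hx
        rcases mem_vals_iff.mp hx with rfl | ⟨i, rfl⟩
        · exact count_pos_iff.mp (by omega : 0 < l.count 1)
        · refine count_pos_iff.mp ?_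
          rw [hcV i]
          have hm : t.get i ∈ t := by
            rw [List.get_eq_getElem]
            exact getElem_mem i.isLt
          exact hpos _ hm
    unfold reducedContent
    rw [htf, sort_toFinset_of_sorted hsorted, hmap]

/-- Backward characterization. -/
lemma lemma_G (ha₁ : 2 ≤ a₁) (hpos : ∀ x ∈ t, 0 < x) {l : List ℕ} {n : ℕ}
    (hf : IsFubini n l) (hrc : reducedContent l = a₁ :: t) :
    (∀ x ∈ l, x ∈ vals a₁ t) ∧ l.count 1 = a₁ ∧
      ∀ i : Fin t.length, l.count (V a₁ t i) = t.get i := by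
  set s := l.toFinset.sort (· ≤ ·) with hs
  have hss : List.Pairwise (· < ·) s := List.sortedLT_iff_pairwise.mp (Finset.sortedLT_sort _)
  have hsl : ∀ x : ℕ, x ∈ s ↔ x ∈ l := by
    intro x
    rw [hs, Finset.mem_sort, mem_toFinset]
  have hmem : ∀ x ∈ l, x ∈ s := fun x hx => (hsl x).mpr hx
  have hmap : s.map (fun y => l.count y) = a₁ :: t := hrc
  have hlen : s.length = t.length + 1 := by
    have := congrArg List.length hmap
    simpa using this
  have key : ∀ j (hj : j < s.length), s[j] = 1 + (((a₁ :: t).take j).sum) := by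
    intro j hj
    have hjl : s[j] ∈ l := (hsl _).mp (getElem_mem hj)
    have h3 := hf.2.2 s[j] hjl
    have h4 := countP_lt_getElem s hss l hmem hj
    rw [h4, map_take, hmap] at h3
    exact h3
  have hsv : s = vals a₁ t := by
    apply List.ext_getElem (by rw [hlen, length_vals])
    intro j hj hj'
    cases j with
    | zero =>
      rw [key 0 hj, vals_getElem_zero]
      simp
    | succ i =>
      rw [key _ hj, vals_getElem_succ hj', take_succ_cons, sum_cons]
      unfold V
      omega
  rw [hsv] at hmap
  have h1 : l.count 1 = a₁ := by
    have := congrArg List.headI hmap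
    simpa [vals] using this
  refine ⟨fun x hx => hsv ▸ hmem x hx, h1, ?_⟩
  intro i
  have hi1 : (i : ℕ) + 1 < (vals a₁ t).length := by
    rw [length_vals]; omega
  have h := congrArg (fun L => L[(i : ℕ) + 1]?) hmap
  simp only [List.getElem?_map] at h
  rw [List.getElem?_eq_getElem hi1] at h
  simp only [Option.map_some] at h
  rw [vals_getElem_succ hi1] at h
  rw [List.getElem?_cons_succ, List.getElem?_eq_getElem i.isLt] at h
  rw [List.get_eq_getElem]
  exact Option.some_injective _ h

end Staircase
end WFaux
namespace WFaux
open List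

section GapWords

variable {a₁ m : ℕ} {t : List ℕ}

/-- The sorted word with `c i` copies of the `i`-th higher value. -/
def gapWord (a₁ : ℕ) (t : List ℕ) (c : Fin t.length → ℕ) : List ℕ :=
  (List.ofFn (fun i : Fin t.length => List.replicate (c i) (V a₁ t i))).flatten

lemma mem_gapWord {c : Fin t.length → ℕ} {x : ℕ} (hx : x ∈ gapWord a₁ t c) :
    ∃ i : Fin t.length, x = V a₁ t i := by
  unfold gapWord at hx
  rw [mem_flatten] at hx
  obtain ⟨w, hw, hxw⟩ := hx
  rw [mem_ofFn] at hw
  obtain ⟨i, rfl⟩ := hw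
  exact ⟨i, eq_of_mem_replicate hxw⟩

lemma V_inj (hpos : ∀ x ∈ t, 0 < x) {i j : Fin t.length}
    (h : V a₁ t i = V a₁ t j) : i = j := by
  by_contra hne
  rcases lt_or_gt_of_ne hne with hlt | hlt
  · exact absurd h (ne_of_lt (V_lt_V hpos hlt i.isLt))
  · exact absurd h.symm (ne_of_lt (V_lt_V hpos hlt j.isLt))

lemma count_gapWord (hpos : ∀ x ∈ t, 0 < x) (c : Fin t.length → ℕ) (i : Fin t.length) :
    (gapWord a₁ t c).count (V a₁ t i) = c i := by
  unfold gapWord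
  rw [List.count_flatten, map_ofFn]
  have h : ((fun w => List.count (V a₁ t i) w) ∘ fun i' : Fin t.length =>
      List.replicate (c i') (V a₁ t i')) = fun i' => if i' = i then c i' else 0 := by
    funext i'
    simp only [Function.comp_apply]
    rcases eq_or_ne i' i with rfl | hne
    · rw [count_replicate_self, if_pos rfl]
    · rw [if_neg hne, count_eq_zero]
      intro hmem
      exact hne (V_inj hpos (eq_of_mem_replicate hmem).symm)
  rw [h, List.sum_ofFn]
  simp

lemma gapWord_sorted (hpos : ∀ x ∈ t, 0 < x) (c : Fin t.length → ℕ) :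
    List.Chain' (· ≤ ·) (gapWord a₁ t c) := by
  rw [List.chain'_iff_pairwise]
  unfold gapWord
  rw [List.pairwise_flatten]
  refine ⟨?_, ?_⟩
  · intro w hw
    rw [mem_ofFn] at hw
    obtain ⟨i, rfl⟩ := hw
    rw [List.pairwise_replicate]
    exact Or.inr le_rfl
  · rw [pairwise_ofFn]
    intro i j hij x hx y hy
    rw [eq_of_mem_replicate hx, eq_of_mem_replicate hy]
    exact le_of_lt (V_lt_V hpos hij i.isLt)

lemma word_eq_gapWord (hpos : ∀ x ∈ t, 0 < x) {w : List ℕ} (hch : List.Chain' (· ≤ ·) w)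
    (hmem : ∀ x ∈ w, ∃ i : Fin t.length, x = V a₁ t i) :
    w = gapWord a₁ t (fun i => w.count (V a₁ t i)) := by
  apply List.Perm.eq_of_pairwise' (List.chain'_iff_pairwise.mp hch)
    (List.chain'_iff_pairwise.mp (gapWord_sorted hpos _)) ?_
  rw [List.perm_iff_count]
  intro x
  by_cases hx : ∃ i : Fin t.length, x = V a₁ t i
  · obtain ⟨i, rfl⟩ := hx
    rw [count_gapWord hpos]
  · rw [count_eq_zero.mpr (fun hxm => hx (hmem x hxm)),
      count_eq_zero.mpr (fun hxm => hx (mem_gapWord hxm))]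

/-- The encoding map: from count matrices to lists. -/
def Phi (a₁ m : ℕ) (t : List ℕ) (c : Fin t.length → Fin m → ℕ) : List ℕ :=
  blockform (List.ofFn (fun j : Fin m => gapWord a₁ t (fun i => c i j)))

lemma Phi_inj (ha₁ : 2 ≤ a₁) (hpos : ∀ x ∈ t, 0 < x)
    {c c' : Fin t.length → Fin m → ℕ} (h : Phi a₁ m t c = Phi a₁ m t c') : c = c' := by
  unfold Phi at h
  have hfree : ∀ (d : Fin t.length → Fin m → ℕ),
      ∀ w ∈ List.ofFn (fun j : Fin m => gapWord a₁ t (fun i => d i j)), ∀ y ∈ w, y ≠ 1 := by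
    intro d w hw y hy
    rw [mem_ofFn] at hw
    obtain ⟨j, rfl⟩ := hw
    obtain ⟨i, rfl⟩ := mem_gapWord hy
    exact ne_of_gt (one_lt_V ha₁ _)
  have hb := blockform_inj _ _ (hfree c) (hfree c') h
  funext i j
  have h2 := congrFun (List.ofFn_inj.mp hb) j
  have h3 := congrArg (fun w => List.count (V a₁ t i) w) h2
  simpa [count_gapWord hpos] using h3

lemma count_one_Phi (ha₁ : 2 ≤ a₁) (hpos : ∀ x ∈ t, 0 < x) (c : Fin t.length → Fin m → ℕ) :
    (Phi a₁ m t c).count 1 = m + 1 := by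
  unfold Phi
  rw [count_one_blockform]
  · simp
  · intro w hw y hy
    rw [mem_ofFn] at hw
    obtain ⟨j, rfl⟩ := hw
    obtain ⟨i, rfl⟩ := mem_gapWord hy
    exact ne_of_gt (one_lt_V ha₁ _)

lemma count_V_Phi (ha₁ : 2 ≤ a₁) (hpos : ∀ x ∈ t, 0 < x) (c : Fin t.length → Fin m → ℕ)
    (i : Fin t.length) : (Phi a₁ m t c).count (V a₁ t i) = ∑ j : Fin m, c i j := by
  unfold Phi
  rw [count_blockform _ (ne_of_gt (one_lt_V ha₁ _)), map_ofFn]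
  have h : ((fun w => List.count (V a₁ t i) w) ∘ fun j : Fin m =>
      gapWord a₁ t (fun i' => c i' j)) = fun j => c i j := by
    funext j
    simp only [Function.comp_apply]
    exact count_gapWord hpos _ i
  rw [h, List.sum_ofFn]

lemma mem_Phi_vals (c : Fin t.length → Fin m → ℕ) {x : ℕ} (hx : x ∈ Phi a₁ m t c) :
    x ∈ vals a₁ t := by
  unfold Phi at hx
  rw [mem_blockform] at hx
  rw [mem_vals_iff]
  rcases hx with rfl | ⟨w, hw, hxw⟩
  · exact Or.inl rfl
  · rw [mem_ofFn] at hw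
    obtain ⟨j, rfl⟩ := hw
    exact Or.inr (mem_gapWord hxw)

lemma chain'_rel_Phi (ha₁ : 2 ≤ a₁) (hpos : ∀ x ∈ t, 0 < x) (c : Fin t.length → Fin m → ℕ) :
    List.Chain' Rel (Phi a₁ m t c) := by
  unfold Phi
  apply chain'_rel_blockform
  intro w hw
  rw [mem_ofFn] at hw
  obtain ⟨j, rfl⟩ := hw
  refine ⟨gapWord_sorted hpos _, ?_⟩
  intro y hy
  obtain ⟨i, rfl⟩ := mem_gapWord hy
  exact le_of_lt (one_lt_V ha₁ _)

lemma map_eq_ofFn_getD (ws : List (List ℕ)) {m : ℕ} (h : ws.length = m) (f : List ℕ → ℕ) :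
    ws.map f = List.ofFn (fun j : Fin m => f (ws.getD (j : ℕ) [])) := by
  subst h
  apply List.ext_getElem (by simp)
  intro i h1 h2
  rw [getElem_map, List.getElem_ofFn, List.getD_eq_getElem]

end GapWords
end WFaux
namespace WFaux
open List

lemma card_sum_eq (m s : ℕ) :
    Nat.card {f : Fin m → ℕ // ∑ j, f j = s} = Nat.multichoose m s := by
  have e1 : {f : Fin m → ℕ // ∑ j, f j = s} ≃
      {f : Fin m → ℕ // f ∈ Finset.piAntidiag (Finset.univ : Finset (Fin m)) s} := by
    apply Equiv.subtypeEquivRight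
    intro f
    rw [Finset.mem_piAntidiag]
    simp
  rw [Nat.card_congr e1, Nat.card_eq_fintype_card, Fintype.card_coe]
  rw [← Finset.map_sym_eq_piAntidiag, Finset.card_map]
  have h2 : (Finset.univ : Finset (Fin m)).sym s = (Finset.univ : Finset (Sym (Fin m) s)) := by
    ext z
    simp [Finset.mem_sym_iff]
  rw [h2, Finset.card_univ, Sym.card_sym_eq_multichoose, Fintype.card_fin]

end WFaux

theorem wflat_wruns_end_in_one_count (n : ℕ) (a : List ℕ)
    (ha : ∀ x ∈ a, 0 < x) (hsum : a.sum = n) (h1 : 2 ≤ a.headI) :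
    {l : List ℕ | IsFubini n l ∧ WeaklyFlattenedWeak l ∧
        reducedContent l = a ∧ l.getLast? = some 1}.ncard =
      ((a.drop 1).map (fun ai => Nat.choose (a.headI + ai - 2) ai)).prod := by
  open WFaux List in
  obtain ⟨a₁, t, rfl⟩ : ∃ a₁ t, a = a₁ :: t := by
    cases a with
    | nil => simp at h1
    | cons a₁ t => exact ⟨a₁, t, rfl⟩
  simp only [List.headI_cons] at h1
  have hpos : ∀ x ∈ t, 0 < x := fun x hx => ha x (List.mem_cons_of_mem _ hx)
  have hn : n = a₁ + t.sum := by rw [← hsum]; simp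
  subst hn
  set m := a₁ - 1 with hm
  have hm1 : m + 1 = a₁ := by omega
  set Dom := {c : Fin t.length → Fin m → ℕ // ∀ i, ∑ j, c i j = t.get i} with hDom
  set Ψ : Dom → List ℕ := fun c => Phi a₁ m t c.val with hΨ
  have hinj : Function.Injective Ψ := by
    intro c c' h
    exact Subtype.ext (Phi_inj h1 hpos h)
  have hSet : {l : List ℕ | IsFubini (a₁ + t.sum) l ∧ WeaklyFlattenedWeak l ∧
      reducedContent l = a₁ :: t ∧ l.getLast? = some 1} = Set.range Ψ := by
    ext l
    simp only [Set.mem_setOf_eq, Set.mem_range]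
    constructor
    · rintro ⟨hfub, hwfw, hrc, hlast⟩
      obtain ⟨hmem, hc1, hcV⟩ := lemma_G h1 hpos hfub hrc
      have hge : ∀ x ∈ l, 1 ≤ x := fun x hx => (hfub.2.1 x hx).1
      have hhc := (wfw_iff hge hlast).mp hwfw
      obtain ⟨ws, hprops, hcount, hbf⟩ :=
        exists_blocks l.length l le_rfl hhc.2 hge hhc.1 hlast
      have hws1 : ∀ w ∈ ws, ∀ y ∈ w, y ≠ 1 := fun w hw => (hprops w hw).2
      have hlenws : ws.length = m := by
        rw [hbf, count_one_blockform ws hws1] at hc1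
        omega
      have hwmem : ∀ w ∈ ws, ∀ x ∈ w, ∃ i : Fin t.length, x = V a₁ t i := by
        intro w hw x hxw
        have hxl : x ∈ l := by
          rw [hbf, mem_blockform]
          exact Or.inr ⟨w, hw, hxw⟩
        rcases mem_vals_iff.mp (hmem x hxl) with rfl | h
        · exact absurd rfl (hws1 w hw _ hxw)
        · exact h
      refine ⟨⟨fun i j => ((ws.getD (j : ℕ) []).count (V a₁ t i)), ?_⟩, ?_⟩
      · intro i
        have h5 : l.count (V a₁ t i) = (ws.map (fun w => w.count (V a₁ t i))).sum := by
          rw [hbf]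
          exact count_blockform _ (ne_of_gt (one_lt_V h1 _)) ws
        rw [map_eq_ofFn_getD ws hlenws, List.sum_ofFn] at h5
        rw [← hcV i, h5]
      · show Phi a₁ m t _ = l
        unfold Phi
        conv_rhs => rw [hbf]
        congr 1
        apply List.ext_getElem (by simp [hlenws])
        intro j hj hj2
        rw [List.getElem_ofFn]
        have hjws : ws.getD (j : ℕ) [] = ws[j] := List.getD_eq_getElem _ _ hj2
        simp only [hjws]
        have hwmem' := hwmem ws[j] (getElem_mem hj2)
        have hch := (hprops ws[j] (getElem_mem hj2)).1
        exact (word_eq_gapWord hpos hch hwmem').symm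
    · rintro ⟨c, rfl⟩
      have hc1 : (Ψ c).count 1 = a₁ := by
        rw [hΨ]
        simp only []
        rw [count_one_Phi h1 hpos]
        omega
      have hcV : ∀ i : Fin t.length, (Ψ c).count (V a₁ t i) = t.get i := by
        intro i
        rw [hΨ]
        simp only []
        rw [count_V_Phi h1 hpos, c.2 i]
      have hmem : ∀ x ∈ Ψ c, x ∈ vals a₁ t := fun x hx => mem_Phi_vals c.1 hx
      obtain ⟨hfub, hrc⟩ := lemma_F h1 hpos hmem hc1 hcV
      have hge : ∀ x ∈ Ψ c, 1 ≤ x := fun x hx => (hfub.2.1 x hx).1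
      have hlast : (Ψ c).getLast? = some 1 := getLast?_blockform _
      refine ⟨hfub, ?_, hrc, hlast⟩
      rw [wfw_iff hge hlast]
      exact ⟨headI_blockform _, chain'_rel_Phi h1 hpos c.1⟩
  rw [hSet, ← Set.image_univ, Set.ncard_image_of_injective _ hinj, Set.ncard_univ]
  have hcard : Nat.card Dom = ∏ i : Fin t.length, Nat.multichoose m (t.get i) := by
    rw [hDom]
    rw [Nat.card_congr (Equiv.subtypePiEquivPi
      (p := fun (i : Fin t.length) (f : Fin m → ℕ) => ∑ j, f j = t.get i))]
    rw [Nat.card_pi]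
    exact Finset.prod_congr rfl (fun i _ => card_sum_eq m (t.get i))
  rw [hcard]
  simp only [List.drop_one, List.headI_cons, List.tail_cons]
  conv_rhs => rw [← List.ofFn_getElem (xs := t)]
  rw [List.map_ofFn, List.prod_ofFn]
  apply Finset.prod_congr rfl
  intro i _
  simp only [Function.comp_apply]
  rw [Nat.multichoose_eq]
  have : t.get i = t[(i : ℕ)] := List.get_eq_getElem (l := t) (i := i)
  rw [this]
  congr 1
  omega
end
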